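/- arXiv:2310.02499 — 4 statements merged into one kernel-verified Lean document; each statement's English description precedes it below -/
import Mathlib

section
/- For every positive integer n, the number of rooted labeled forests on the vertex set {1,...,n} (unordered forests where each vertex gets a distinct label and each component has a distinguished root) equals (n+1)^(n-1), and the number of rooted labeled trees on {1,...,n} equals n^(n-1). -/
open Filter

/-- A rooted labeled forest on `Fin n`, encoded by its parent function together
with an acyclicity witness (a depth-like function decreasing along parents). -/
def IsForest (n : ℕ) (p : Fin n → Option (Fin n)) : Prop :=
  ∃ d : Fin n → ℕ, ∀ v w : Fin n, p v = some w → d w < d v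

/-- The type of rooted labeled forests on `[n]`. -/
def Forest (n : ℕ) : Type := {p : Fin n → Option (Fin n) // IsForest n p}

/-- `F.Ancestor a b` means `a` is a strict ancestor of `b` in the forest `F`. -/
def Forest.Ancestor {n : ℕ} (F : Forest n) (a b : Fin n) : Prop :=
  Relation.TransGen (fun x y : Fin n => F.val x = some y) b a

/-- A forest is a tree when it has exactly one root. -/
def Forest.IsTree {n : ℕ} (F : Forest n) : Prop :=
  ∃! v : Fin n, F.val v = none

/-- A pattern: a permutation of `Fin k` for some `k`. -/
abbrev Pattern : Type := Σ k : ℕ, Equiv.Perm (Fin k)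

/-- `F` contains an instance of the pattern `π`: a chain of vertices, each an
ancestor of the next, whose labels are in the same relative order as `π`. -/
def Forest.Contains {n : ℕ} (F : Forest n) (π : Pattern) : Prop :=
  ∃ v : Fin π.1 → Fin n,
    (∀ i j : Fin π.1, i < j → F.Ancestor (v i) (v j)) ∧
    (∀ i j : Fin π.1, π.2 i < π.2 j ↔ v i < v j)

/-- `F` avoids every pattern in `S`. -/
def Forest.AvoidsSet {n : ℕ} (F : Forest n) (S : Set Pattern) : Prop :=
  ∀ π ∈ S, ¬ F.Contains π

/-- The number of rooted labeled forests on `[n]` avoiding `S`. -/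
noncomputable def forestCount (S : Set Pattern) (n : ℕ) : ℕ :=
  Nat.card {F : Forest n // F.AvoidsSet S}

/-- The number of rooted labeled trees on `[n]` avoiding `S`. -/
noncomputable def treeCount (S : Set Pattern) (n : ℕ) : ℕ :=
  Nat.card {F : Forest n // F.IsTree ∧ F.AvoidsSet S}

namespace CayleyAux

variable {n : ℕ}

def ForestOn (V : Finset (Fin n)) (p : Fin n → Option (Fin n)) : Prop :=
  (∀ v, v ∉ V → p v = none) ∧ (∀ v w, p v = some w → w ∈ V) ∧
    ∃ d : Fin n → ℕ, ∀ v w : Fin n, p v = some w → d w < d v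

lemma leaves_nonempty {V : Finset (Fin n)} {p} (hV : V.Nonempty) (hp : ForestOn V p) :
    (V.filter (fun v => ∀ w ∈ V, p w ≠ some v)).Nonempty := by
  obtain ⟨d, hd⟩ := hp.2.2
  obtain ⟨v, hv, hmax⟩ := Finset.exists_max_image V d hV
  refine ⟨v, Finset.mem_filter.2 ⟨hv, fun w hw hpw => ?_⟩⟩
  exact absurd (hmax w hw) (not_le.2 (hd w v hpw))

def encodeF : ℕ → (Fin n → Option (Fin n)) → Finset (Fin n) → List (Option (Fin n))
  | 0, _, _ => []
  | (k+1), p, V =>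
    match (V.filter (fun v => ∀ w ∈ V, p w ≠ some v)).max with
    | none => []
    | some ℓ => p ℓ :: encodeF k (Function.update p ℓ none) (V.erase ℓ)

def decodeF : List (Option (Fin n)) → Finset (Fin n) → (Fin n → Option (Fin n))
  | [], _ => fun _ => none
  | (s :: rest), V =>
    match (V.filter (fun v => some v ∉ s :: rest)).max with
    | none => fun _ => none
    | some ℓ => Function.update (decodeF rest (V.erase ℓ)) ℓ s

lemma forestOn_erase {V : Finset (Fin n)} {p} (hp : ForestOn V p) {ℓ : Fin n}
    (hleaf : ∀ w ∈ V, p w ≠ some ℓ) :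
    ForestOn (V.erase ℓ) (Function.update p ℓ none) := by
  obtain ⟨h1, h2, d, hd⟩ := hp
  refine ⟨fun v hv => ?_, fun v w hvw => ?_, d, fun v w hvw => ?_⟩
  · rcases eq_or_ne v ℓ with rfl | hne
    · simp
    · rw [Function.update_of_ne hne]
      exact h1 v (fun hvV => hv (Finset.mem_erase.2 ⟨hne, hvV⟩))
  · rcases eq_or_ne v ℓ with rfl | hne
    · simp at hvw
    · rw [Function.update_of_ne hne] at hvw
      refine Finset.mem_erase.2 ⟨?_, h2 v w hvw⟩
      rintro rfl
      have hvV : v ∈ V := by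
        by_contra hv
        rw [h1 v hv] at hvw; exact nomatch hvw
      exact hleaf v hvV hvw
  · rcases eq_or_ne v ℓ with rfl | hne
    · simp at hvw
    · rw [Function.update_of_ne hne] at hvw
      exact hd v w hvw

lemma enc_spec : ∀ (k : ℕ) (V : Finset (Fin n)) (p), V.card = k + 1 → ForestOn V p →
    (encodeF k p V).length = k ∧
    (∀ x, some x ∈ encodeF k p V ↔ ∃ y ∈ V, p y = some x) ∧
    decodeF (encodeF k p V) V = p := by
  intro k
  induction k with
  | zero =>
    intro V p hcard hp
    obtain ⟨v, rfl⟩ := Finset.card_eq_one.1 hcard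
    obtain ⟨d, hd⟩ := hp.2.2
    have hnone : ∀ y, p y = none := by
      intro y
      rcases eq_or_ne y v with rfl | hne
      · by_contra h
        obtain ⟨x, hx⟩ := Option.ne_none_iff_exists'.1 h
        have := hp.2.1 y x hx
        simp only [Finset.mem_singleton] at this
        subst this
        exact absurd (hd _ _ hx) (lt_irrefl _)
      · exact hp.1 y (by simpa using hne)
    refine ⟨rfl, fun x => ?_, ?_⟩
    · simp only [encodeF, List.not_mem_nil, false_iff]
      intro h
      obtain ⟨y, -, hy⟩ := h
      rw [hnone y] at hy; exact nomatch hy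
    · funext y
      simp [encodeF, decodeF, hnone y]
  | succ k ih =>
    intro V p hcard hp
    have hVne : V.Nonempty := Finset.card_pos.1 (by omega)
    obtain ⟨ℓ, hmax⟩ := Finset.max_of_nonempty (leaves_nonempty hVne hp)
    have hℓmem := Finset.mem_of_max hmax
    rw [Finset.mem_filter] at hℓmem
    obtain ⟨hℓV, hleaf⟩ := hℓmem
    have hp' : ForestOn (V.erase ℓ) (Function.update p ℓ none) := forestOn_erase hp hleaf
    have hcard' : (V.erase ℓ).card = k + 1 := by
      rw [Finset.card_erase_of_mem hℓV, hcard]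
      omega
    obtain ⟨ihlen, ihent, ihdec⟩ := ih (V.erase ℓ) _ hcard' hp'
    have hunf : encodeF (k+1) p V
        = p ℓ :: encodeF k (Function.update p ℓ none) (V.erase ℓ) := by
      rw [encodeF, hmax]
    have hent : ∀ x, some x ∈ encodeF (k+1) p V ↔ ∃ y ∈ V, p y = some x := by
      intro x
      rw [hunf, List.mem_cons]
      constructor
      · rintro (h | h)
        · exact ⟨ℓ, hℓV, h.symm⟩
        · obtain ⟨y, hy, hpy⟩ := ihent x |>.1 h
          rw [Function.update_of_ne (Finset.mem_erase.1 hy).1] at hpy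
          exact ⟨y, Finset.mem_of_mem_erase hy, hpy⟩
      · rintro ⟨y, hyV, hpy⟩
        rcases eq_or_ne y ℓ with rfl | hne
        · exact Or.inl hpy.symm
        · refine Or.inr ((ihent x).2 ⟨y, Finset.mem_erase.2 ⟨hne, hyV⟩, ?_⟩)
          rwa [Function.update_of_ne hne]
    refine ⟨by rw [hunf]; simp [ihlen], hent, ?_⟩
    -- decode
    have hfeq : (V.filter (fun v => some v ∉ p ℓ :: encodeF k (Function.update p ℓ none) (V.erase ℓ)))
        = V.filter (fun v => ∀ w ∈ V, p w ≠ some v) := by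
      refine Finset.filter_congr fun v hv => ?_
      rw [← hunf, hent v]
      push_neg
      constructor
      · intro h w hw hpw; exact (h w hw) hpw
      · intro h w hw hpw; exact (h w hw) hpw
    have hdunf : decodeF (p ℓ :: encodeF k (Function.update p ℓ none) (V.erase ℓ)) V
        = Function.update (decodeF (encodeF k (Function.update p ℓ none) (V.erase ℓ)) (V.erase ℓ)) ℓ (p ℓ) := by
      rw [decodeF, hfeq, hmax]
    rw [hunf, hdunf, ihdec]
    funext v
    rcases eq_or_ne v ℓ with rfl | hne
    · simp
    · simp [Function.update_of_ne hne]

lemma filter_mem_card_le (V : Finset (Fin n)) (l : List (Option (Fin n))) :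
    (V.filter (fun v => some v ∈ l)).card ≤ l.length := by
  have hsub : V.filter (fun v => some v ∈ l) ⊆ (l.filterMap id).toFinset := by
    intro v hv
    rw [List.mem_toFinset, List.mem_filterMap]
    exact ⟨some v, (Finset.mem_filter.1 hv).2, rfl⟩
  calc (V.filter (fun v => some v ∈ l)).card ≤ (l.filterMap id).toFinset.card :=
        Finset.card_le_card hsub
    _ ≤ (l.filterMap id).length := List.toFinset_card_le _
    _ ≤ l.length := List.length_filterMap_le _ _

lemma nonleaf_filter_nonempty {V : Finset (Fin n)} {l : List (Option (Fin n))}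
    (hcard : V.card = l.length + 1) :
    (V.filter (fun v => some v ∉ l)).Nonempty := by
  rw [← Finset.card_pos]
  have h1 := Finset.card_filter_add_card_filter_not
    (s := V) (p := fun v => some v ∈ l)
  have h2 := filter_mem_card_le V l
  omega

lemma dec_spec : ∀ (l : List (Option (Fin n))) (V : Finset (Fin n)),
    V.card = l.length + 1 → (∀ x, some x ∈ l → x ∈ V) →
    ForestOn V (decodeF l V) ∧ encodeF l.length (decodeF l V) V = l := by
  intro l
  induction l with
  | nil =>
    intro V hcard _
    refine ⟨⟨fun _ _ => rfl, fun v w h => by simp [decodeF] at h,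
      ⟨fun _ => 0, fun v w h => by simp [decodeF] at h⟩⟩, rfl⟩
  | cons s rest ih =>
    intro V hcard hin
    have hne : (V.filter (fun v => some v ∉ s :: rest)).Nonempty :=
      nonleaf_filter_nonempty (by simpa using hcard)
    obtain ⟨ℓ, hmax⟩ := Finset.max_of_nonempty hne
    have hmem := Finset.mem_of_max hmax
    rw [Finset.mem_filter] at hmem
    obtain ⟨hℓV, hℓnot⟩ := hmem
    have hcard' : (V.erase ℓ).card = rest.length + 1 := by
      rw [Finset.card_erase_of_mem hℓV, hcard]
      simp
    have hin' : ∀ x, some x ∈ rest → x ∈ V.erase ℓ := by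
      intro x hx
      refine Finset.mem_erase.2 ⟨?_, hin x (List.mem_cons_of_mem _ hx)⟩
      rintro rfl
      exact hℓnot (List.mem_cons_of_mem _ hx)
    obtain ⟨hq, henc⟩ := ih (V.erase ℓ) hcard' hin'
    set q := decodeF rest (V.erase ℓ) with hqdef
    have hdunf : decodeF (s :: rest) V = Function.update q ℓ s := by
      rw [decodeF, hmax]
    have hsnℓ : s ≠ some ℓ := by
      rintro rfl
      exact hℓnot (List.mem_cons_self)
    have hqℓ : q ℓ = none := hq.1 ℓ (Finset.notMem_erase ℓ V)
    have hFor : ForestOn V (Function.update q ℓ s) := by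
      refine ⟨?_, ?_, ?_⟩
      · intro v hv
        have hvℓ : v ≠ ℓ := fun h => hv (h ▸ hℓV)
        rw [Function.update_of_ne hvℓ]
        exact hq.1 v (fun h => hv (Finset.mem_of_mem_erase h))
      · intro v w hvw
        rcases eq_or_ne v ℓ with rfl | hne2
        · rw [Function.update_self] at hvw
          exact hin w (by rw [← hvw]; exact List.mem_cons_self)
        · rw [Function.update_of_ne hne2] at hvw
          exact Finset.mem_of_mem_erase (hq.2.1 v w hvw)
      · obtain ⟨d', hd'⟩ := hq.2.2
        refine ⟨fun x => if x = ℓ then (Finset.univ.sup d') + 1 else d' x, ?_⟩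
        intro v w hvw
        rcases eq_or_ne v ℓ with rfl | hne2
        · rw [Function.update_self] at hvw
          have hwv : w ≠ v := by
            rintro rfl
            exact hsnℓ hvw
          simp only [if_pos rfl, if_neg hwv]
          exact Nat.lt_succ_of_le (Finset.le_sup (Finset.mem_univ w))
        · rw [Function.update_of_ne hne2] at hvw
          have hwℓ : w ≠ ℓ := (Finset.mem_erase.1 (hq.2.1 v w hvw)).1
          simp only [if_neg hwℓ, if_neg hne2]
          exact hd' v w hvw
    refine ⟨hdunf ▸ hFor, ?_⟩
    obtain ⟨-, qent, -⟩ := enc_spec rest.length (V.erase ℓ) q hcard' hq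
    rw [henc] at qent
    have hfeq : V.filter (fun v => ∀ w ∈ V, Function.update q ℓ s w ≠ some v)
        = V.filter (fun v => some v ∉ s :: rest) := by
      refine Finset.filter_congr fun v hv => ?_
      have hiff : some v ∈ s :: rest ↔ ∃ w ∈ V, Function.update q ℓ s w = some v := by
        rw [List.mem_cons]
        constructor
        · rintro (h | h)
          · exact ⟨ℓ, hℓV, by rw [Function.update_self, ← h]⟩
          · obtain ⟨y, hy, hqy⟩ := (qent v).1 h
            exact ⟨y, Finset.mem_of_mem_erase hy,
              by rw [Function.update_of_ne (Finset.mem_erase.1 hy).1]; exact hqy⟩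
        · rintro ⟨w, hwV, hw⟩
          rcases eq_or_ne w ℓ with rfl | hne2
          · rw [Function.update_self] at hw
            exact Or.inl hw.symm
          · rw [Function.update_of_ne hne2] at hw
            exact Or.inr ((qent v).2 ⟨w, Finset.mem_erase.2 ⟨hne2, hwV⟩, hw⟩)
      rw [hiff]
      push_neg
      constructor
      · intro h w hw hpw; exact (h w hw) hpw
      · intro h w hw hpw; exact (h w hw) hpw
    have hunf2 : encodeF (rest.length + 1) (Function.update q ℓ s) V
        = Function.update q ℓ s ℓ ::
          encodeF rest.length (Function.update (Function.update q ℓ s) ℓ none) (V.erase ℓ) := by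
      rw [encodeF, hfeq, hmax]
    have hupd2 : Function.update (Function.update q ℓ s) ℓ none = q := by
      funext x
      rcases eq_or_ne x ℓ with rfl | hne2
      · rw [Function.update_self, hqℓ]
      · rw [Function.update_of_ne hne2, Function.update_of_ne hne2]
    show encodeF (s :: rest).length (decodeF (s :: rest) V) V = s :: rest
    rw [hdunf, List.length_cons, hunf2, hupd2, Function.update_self, henc]


/-- Lists of length `k` with entries satisfying `P` are equivalent to tuples. -/
def listEquiv (P : α → Prop) (k : ℕ) :
    (Fin k → {a // P a}) ≃ {l : List α // l.length = k ∧ ∀ a ∈ l, P a} where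
  toFun f := ⟨List.ofFn (fun i => (f i).1), by simp, by
    intro a ha
    rw [List.mem_ofFn] at ha
    obtain ⟨i, rfl⟩ := ha
    exact (f i).2⟩
  invFun l := fun i => ⟨l.1.get (Fin.cast l.2.1.symm i), l.2.2 _ (l.1.get_mem _)⟩
  left_inv f := by
    funext i
    apply Subtype.ext
    simp [List.get_ofFn]
  right_inv := by
    rintro ⟨l, hl, hP⟩
    apply Subtype.ext
    apply List.ext_get (by simp [hl])
    intro i h1 h2
    simp [List.get_ofFn]

lemma card_lists (P : α → Prop) (k : ℕ) [Finite {a // P a}] :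
    Nat.card {l : List α // l.length = k ∧ ∀ a ∈ l, P a} = Nat.card {a // P a} ^ k := by
  rw [← Nat.card_congr (listEquiv P k), Nat.card_fun]
  simp

def optEquiv (V : Finset (Fin n)) :
    {a : Option (Fin n) // ∀ x, a = some x → x ∈ V} ≃ Option {x : Fin n // x ∈ V} where
  toFun a := match a with
    | ⟨none, _⟩ => none
    | ⟨some x, h⟩ => some ⟨x, h x rfl⟩
  invFun o := match o with
    | none => ⟨none, by simp⟩
    | some x => ⟨some x.1, by intro y hy; injection hy with h2; exact h2 ▸ x.2⟩
  left_inv := by rintro ⟨(_ | x), h⟩ <;> rfl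
  right_inv := by rintro (_ | ⟨x, hx⟩) <;> rfl

lemma card_opt (V : Finset (Fin n)) :
    Nat.card {a : Option (Fin n) // ∀ x, a = some x → x ∈ V} = V.card + 1 := by
  rw [Nat.card_congr (optEquiv V), Nat.card_eq_fintype_card, Fintype.card_option,
    Fintype.card_coe]

lemma card_codes (V : Finset (Fin n)) (k : ℕ) :
    Nat.card {l : List (Option (Fin n)) // l.length = k ∧ ∀ x, some x ∈ l → x ∈ V}
      = (V.card + 1) ^ k := by
  have e : {l : List (Option (Fin n)) // l.length = k ∧ ∀ x, some x ∈ l → x ∈ V}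
      ≃ {l : List (Option (Fin n)) // l.length = k ∧ ∀ a ∈ l, ∀ x, a = some x → x ∈ V} :=
    Equiv.subtypeEquivRight (by
      intro l
      constructor
      · rintro ⟨h1, h2⟩
        exact ⟨h1, fun a ha x hx => h2 x (hx ▸ ha)⟩
      · rintro ⟨h1, h2⟩
        exact ⟨h1, fun x hx => h2 _ hx x rfl⟩)
  rw [Nat.card_congr e, card_lists, card_opt]


lemma card_forestOn (V : Finset (Fin n)) :
    Nat.card {p : Fin n → Option (Fin n) // ForestOn V p} = (V.card + 1) ^ (V.card - 1) := by
  rcases V.eq_empty_or_nonempty with rfl | hne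
  · haveI : Unique {p : Fin n → Option (Fin n) // ForestOn (∅ : Finset (Fin n)) p} :=
      { default := ⟨fun _ => none, ⟨fun _ _ => rfl, fun v w h => by simp at h,
          ⟨fun _ => 0, fun v w h => by simp at h⟩⟩⟩
        uniq := by
          rintro ⟨p, hp⟩
          apply Subtype.ext
          funext v
          exact hp.1 v (Finset.notMem_empty v) }
    rw [Nat.card_unique]
    simp
  · obtain ⟨k, hk⟩ : ∃ k, V.card = k + 1 :=
      ⟨V.card - 1, by have := Finset.card_pos.2 hne; omega⟩
    have e : {p : Fin n → Option (Fin n) // ForestOn V p}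
        ≃ {l : List (Option (Fin n)) // l.length = k ∧ ∀ x, some x ∈ l → x ∈ V} :=
      { toFun := fun p => ⟨encodeF k p.1 V, (enc_spec k V p.1 hk p.2).1, fun x hx => by
          obtain ⟨y, hy, hpy⟩ := ((enc_spec k V p.1 hk p.2).2.1 x).1 hx
          exact p.2.2.1 y x hpy⟩
        invFun := fun l => ⟨decodeF l.1 V, (dec_spec l.1 V (by rw [hk, l.2.1]) l.2.2).1⟩
        left_inv := fun p => Subtype.ext (enc_spec k V p.1 hk p.2).2.2
        right_inv := by
          rintro ⟨l, hl, hV⟩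
          apply Subtype.ext
          have h := (dec_spec l V (by rw [hk, hl]) hV).2
          simpa [hl] using h }
    rw [Nat.card_congr e, card_codes, hk]
    simp

end CayleyAux

open CayleyAux

instance forestFinite (n : ℕ) : Finite (Forest n) := by
  unfold Forest
  infer_instance

lemma card_forest (n : ℕ) : Nat.card (Forest n) = (n + 1) ^ (n - 1) := by
  have e : Forest n ≃ {p : Fin n → Option (Fin n) // ForestOn Finset.univ p} :=
    Equiv.subtypeEquivRight (fun p =>
      ⟨fun h => ⟨fun v hv => absurd (Finset.mem_univ v) hv, fun v w _ => Finset.mem_univ w, h⟩,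
       fun h => h.2.2⟩)
  rw [Nat.card_congr e, card_forestOn]
  simp

def delRoot {n : ℕ} (r : Fin n) (p : Fin n → Option (Fin n)) : Fin n → Option (Fin n) :=
  fun v => (p v).bind (fun w => if w = r then none else some w)

def addRoot {n : ℕ} (r : Fin n) (q : Fin n → Option (Fin n)) : Fin n → Option (Fin n) :=
  fun v => if v = r then none else some ((q v).getD r)

lemma delRoot_eq_some {n : ℕ} {r : Fin n} {p : Fin n → Option (Fin n)} {v w : Fin n} :
    delRoot r p v = some w ↔ p v = some w ∧ w ≠ r := by
  unfold delRoot
  cases hpv : p v with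
  | none => simp
  | some u =>
    show (if u = r then none else some u) = some w ↔ some u = some w ∧ w ≠ r
    by_cases hu : u = r
    · rw [if_pos hu]
      constructor
      · intro h; cases h
      · rintro ⟨h, hw⟩
        injection h with h
        exact absurd (h ▸ hu) hw
    · rw [if_neg hu]
      constructor
      · intro h
        injection h with h
        exact ⟨h ▸ rfl, h ▸ hu⟩
      · rintro ⟨h, -⟩
        exact h

/-- Deleting the root of a tree rooted at `r` yields a forest on the other vertices. -/
def treeRootEquiv (n : ℕ) (r : Fin n) :
    {F : Forest n // F.val r = none ∧ ∀ v, F.val v = none → v = r}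
      ≃ {q : Fin n → Option (Fin n) // ForestOn (Finset.univ.erase r) q} where
  toFun := fun ⟨F, h1, _⟩ =>
    ⟨delRoot r F.val, by
      refine ⟨?_, ?_, ?_⟩
      · intro v hv
        have hvr : v = r := by simpa using hv
        show (F.val v).bind _ = none
        rw [hvr, h1]
        rfl
      · intro v w hvw
        obtain ⟨-, hwr⟩ := delRoot_eq_some.1 hvw
        exact Finset.mem_erase.2 ⟨hwr, Finset.mem_univ _⟩
      · obtain ⟨d, hd⟩ := F.2
        exact ⟨d, fun v w hvw => hd v w (delRoot_eq_some.1 hvw).1⟩⟩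
  invFun := fun ⟨q, hq⟩ =>
    ⟨⟨addRoot r q, by
      obtain ⟨d', hd'⟩ := hq.2.2
      refine ⟨fun x => if x = r then 0 else d' x + 1, fun v w hvw => ?_⟩
      unfold addRoot at hvw
      by_cases hv : v = r
      · rw [if_pos hv] at hvw; exact nomatch hvw
      · rw [if_neg hv] at hvw
        injection hvw with hvw
        simp only [if_neg hv]
        rcases hqv : q v with - | u
        · rw [hqv] at hvw
          simp only [Option.getD_none] at hvw
          rw [← hvw]
          simp
        · rw [hqv] at hvw
          simp only [Option.getD_some] at hvw
          have hur : w ≠ r := hvw ▸ (Finset.mem_erase.1 (hq.2.1 v u hqv)).1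
          rw [if_neg hur, ← hvw]
          exact Nat.succ_lt_succ (hd' v u hqv)⟩, by
        simp [addRoot], by
        intro v hv
        by_contra h
        unfold addRoot at hv
        simp only [if_neg h] at hv
        exact nomatch hv⟩
  left_inv := by
    rintro ⟨⟨p, hp⟩, h1, h2⟩
    apply Subtype.ext
    apply Subtype.ext
    funext v
    show addRoot r (delRoot r p) v = p v
    unfold addRoot
    by_cases hv : v = r
    · rw [if_pos hv, hv]
      exact h1.symm
    · rw [if_neg hv]
      rcases hpv : p v with - | u
      · exact absurd (h2 v hpv) hv
      · by_cases hu : u = r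
        · simp [delRoot, hpv, hu]
        · simp [delRoot, hpv, hu]
  right_inv := by
    rintro ⟨q, hq⟩
    apply Subtype.ext
    funext v
    show delRoot r (addRoot r q) v = q v
    unfold delRoot addRoot
    by_cases hv : v = r
    · rw [if_pos hv]
      exact (hq.1 v (by simp [hv])).symm
    · rw [if_neg hv]
      rcases hqv : q v with - | u
      · simp
      · have hur : u ≠ r := (Finset.mem_erase.1 (hq.2.1 v u hqv)).1
        simp [hur]

/-- Trees with root `r` within the type of all trees. -/
def rootFiberEquiv (n : ℕ) (r : Fin n) :
    {a : {F : Forest n // F.IsTree} // a.2.choose = r}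
      ≃ {F : Forest n // F.val r = none ∧ ∀ v, F.val v = none → v = r} where
  toFun := fun ⟨⟨F, hT⟩, hc⟩ => ⟨F, by rw [← hc]; exact hT.choose_spec.1,
    fun v hv => by rw [← hc]; exact hT.choose_spec.2 v hv⟩
  invFun F := ⟨⟨F.1, ⟨r, F.2.1, F.2.2⟩⟩,
    F.2.2 _ (show F.1.IsTree from ⟨r, F.2.1, F.2.2⟩).choose_spec.1⟩
  left_inv a := Subtype.ext (Subtype.ext rfl)
  right_inv F := Subtype.ext rfl

lemma card_tree (n : ℕ) (hn : 0 < n) :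
    Nat.card {F : Forest n // F.IsTree} = n ^ (n - 1) := by
  haveI : ∀ r : Fin n,
      Fintype {F : Forest n // F.val r = none ∧ ∀ v, F.val v = none → v = r} :=
    fun r => Fintype.ofFinite _
  haveI : ∀ r : Fin n,
      Fintype {a : {F : Forest n // F.IsTree} // a.2.choose = r} :=
    fun r => Fintype.ofFinite _
  rw [Nat.card_congr
    (Equiv.sigmaFiberEquiv (fun a : {F : Forest n // F.IsTree} => a.2.choose)).symm,
    Nat.card_eq_fintype_card, Fintype.card_sigma]
  have hr : ∀ r : Fin n,
      Fintype.card {a : {F : Forest n // F.IsTree} // a.2.choose = r}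
        = n ^ (n - 2) := by
    intro r
    rw [← Nat.card_eq_fintype_card,
      Nat.card_congr ((rootFiberEquiv n r).trans (treeRootEquiv n r)), card_forestOn]
    have h1 : (Finset.univ.erase r).card = n - 1 := by
      rw [Finset.card_erase_of_mem (Finset.mem_univ r)]
      simp
    rw [h1]
    congr 1 <;> omega
  rw [Finset.sum_congr rfl (fun r _ => hr r), Finset.sum_const, Finset.card_univ,
    Fintype.card_fin, smul_eq_mul]
  rcases n with - | m
  · omega
  · rcases m with - | m
    · rfl
    · rw [show m + 2 - 2 = m by omega, show m + 2 - 1 = m + 1 by omega, pow_succ, mul_comm]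


/-- Cayley's formula: there are `(n+1)^(n-1)` rooted labeled forests on `[n]`
and `n^(n-1)` rooted labeled trees on `[n]`, for every positive `n`. -/
theorem cayley_forest_tree_count (n : ℕ) (hn : 0 < n) :
    Nat.card (Forest n) = (n + 1) ^ (n - 1) ∧
    Nat.card {F : Forest n // F.IsTree} = n ^ (n - 1) :=
  ⟨card_forest n, card_tree n hn⟩
end

section
/- If S contains the pattern 1,2,...,k and the pattern ℓ,ℓ−1,...,1 for some k,ℓ, then lim_{n→∞} f_n(S)^{1/n}/n = 0, where f_n(S) is the number of rooted labeled forests on [n] avoiding S. -/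
open Filter

/- ### Auxiliary machinery -/

namespace SWAux

variable {n : ℕ}

lemma anc_def {F : Forest n} {a b : Fin n} :
    F.Ancestor a b ↔ Relation.TransGen (fun x y : Fin n => F.val x = some y) b a := Iff.rfl

noncomputable def dep (F : Forest n) : Fin n → ℕ := F.2.choose

lemma dep_lt (F : Forest n) : ∀ v w, F.1 v = some w → dep F w < dep F v := F.2.choose_spec

lemma anc_dep {F : Forest n} {a b : Fin n} (h : F.Ancestor a b) : dep F a < dep F b := by
  rw [anc_def] at h
  induction h with
  | single h => exact dep_lt F _ _ h
  | tail _ h ih => exact lt_trans (dep_lt F _ _ h) ih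

lemma anc_irrefl {F : Forest n} {a : Fin n} (h : F.Ancestor a a) : False :=
  lt_irrefl _ (anc_dep h)

lemma anc_trans {F : Forest n} {a b c : Fin n} (h1 : F.Ancestor a b) (h2 : F.Ancestor b c) :
    F.Ancestor a c := Relation.TransGen.trans (anc_def.mp h2) (anc_def.mp h1)

lemma step_of_anc {F : Forest n} {a v : Fin n} (h : F.Ancestor a v) : ∃ w, F.1 v = some w := by
  obtain ⟨b, hb, -⟩ := Relation.TransGen.head'_iff.mp (anc_def.mp h)
  exact ⟨b, hb⟩

lemma anc_parent_iff {F : Forest n} {v w : Fin n} (h : F.1 v = some w) (a : Fin n) :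
    F.Ancestor a v ↔ (a = w ∨ F.Ancestor a w) := by
  constructor
  · intro ha
    obtain ⟨b, hb, hba⟩ := Relation.TransGen.head'_iff.mp (anc_def.mp ha)
    have hbw : b = w := Option.some_injective _ (hb.symm.trans h)
    subst hbw
    rcases Relation.reflTransGen_iff_eq_or_transGen.mp hba with rfl | htg
    · exact Or.inl rfl
    · exact Or.inr htg
  · rintro (rfl | ha)
    · exact Relation.TransGen.single h
    · exact Relation.TransGen.head h ha

noncomputable def lev (F : Forest n) (v : Fin n) : ℕ := {a | F.Ancestor a v}.ncard

lemma lev_parent {F : Forest n} {v w : Fin n} (h : F.1 v = some w) :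
    lev F v = lev F w + 1 := by
  have hset : {a | F.Ancestor a v} = insert w {a | F.Ancestor a w} := by
    ext a; simp [anc_parent_iff h, Set.mem_insert_iff]
  have hnm : w ∉ {a | F.Ancestor a w} := fun hw => anc_irrefl hw
  rw [lev, hset, Set.ncard_insert_of_notMem hnm (Set.toFinite _)]
  rfl

lemma anc_tri {F : Forest n} :
    ∀ N v, dep F v < N → ∀ a b, F.Ancestor a v → F.Ancestor b v →
      a = b ∨ F.Ancestor a b ∨ F.Ancestor b a := by
  intro N
  induction N with
  | zero => intro v hv; omega
  | succ N ih =>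
    intro v hv a b ha hb
    obtain ⟨w, hw⟩ := step_of_anc ha
    rw [anc_parent_iff hw] at ha hb
    rcases ha with rfl | ha <;> rcases hb with rfl | hb
    · exact Or.inl rfl
    · exact Or.inr (Or.inr hb)
    · exact Or.inr (Or.inl ha)
    · exact ih w (by have := dep_lt F v w hw; omega) a b ha hb

lemma lev_pos_parent {F : Forest n} {v : Fin n} (h : 0 < lev F v) :
    ∃ w, F.1 v = some w := by
  have : {a | F.Ancestor a v}.Nonempty := by
    rw [← Set.ncard_pos (Set.toFinite _)]; exact h
  obtain ⟨a, ha⟩ := this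
  exact step_of_anc ha

lemma exists_chain {F : Forest n} :
    ∀ N v, lev F v = N → ∃ c : Fin (N + 1) → Fin n,
      (∀ i j, i < j → F.Ancestor (c i) (c j)) ∧ c (Fin.last N) = v := by
  intro N
  induction N with
  | zero =>
    intro v _
    refine ⟨fun _ => v, fun i j hij => False.elim ?_, rfl⟩
    have hi := i.isLt; have hj := j.isLt; have := Fin.lt_def.mp hij; omega
  | succ N ih =>
    intro v hv
    obtain ⟨w, hw⟩ := lev_pos_parent (F := F) (v := v) (by omega)
    have hlw : lev F w = N := by have := lev_parent hw; omega
    obtain ⟨c, hc, hcl⟩ := ih w hlw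
    refine ⟨Fin.snoc c v, ?_, by simp⟩
    intro i j hij
    rcases Fin.eq_castSucc_or_eq_last j with ⟨j', rfl⟩ | rfl
    · have hi : i ≠ Fin.last (N + 1) := Fin.ne_last_of_lt hij
      obtain ⟨i', rfl⟩ := Fin.exists_castSucc_eq.mpr hi
      rw [Fin.snoc_castSucc, Fin.snoc_castSucc]
      exact hc i' j' (by simpa using hij)
    · have hi : i ≠ Fin.last (N + 1) := Fin.ne_last_of_lt hij
      obtain ⟨i', rfl⟩ := Fin.exists_castSucc_eq.mpr hi
      rw [Fin.snoc_castSucc, Fin.snoc_last]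
      have hwv : F.Ancestor w v := Relation.TransGen.single hw
      rcases eq_or_lt_of_le (Fin.le_last i') with heq | hlt
    -- i' = last or i' < last
      · rw [heq, hcl]; exact hwv
      · exact anc_trans (hcl ▸ hc i' (Fin.last N) hlt) hwv

end SWAux

namespace SWAux

open Function Finset in
theorem erdos_szekeres {α : Type*} [LinearOrder α] {r s n : ℕ} {f : Fin n → α} (hn : r * s < n) (hf : Injective f) :
    (∃ t : Finset (Fin n), r < #t ∧ StrictMonoOn f ↑t) ∨
      ∃ t : Finset (Fin n), s < #t ∧ StrictAntiOn f ↑t := by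
  -- Given an index `i`, produce the set of increasing (resp., decreasing) subsequences which ends
  -- at `i`.
  let inc_sequences_ending_in : Fin n → Finset (Finset (Fin n)) := fun i =>
    univ.powerset.filter fun t => Finset.max t = i ∧ StrictMonoOn f ↑t
  let dec_sequences_ending_in : Fin n → Finset (Finset (Fin n)) := fun i =>
    univ.powerset.filter fun t => Finset.max t = i ∧ StrictAntiOn f ↑t
  -- The singleton sequence is in both of the above collections.
  -- (This is useful to show that the maximum length subsequence is at least 1, and that the set
  -- of subsequences is nonempty.)
  have inc_i : ∀ i, {i} ∈ inc_sequences_ending_in i := fun i => by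
    simp [inc_sequences_ending_in, StrictMonoOn]
  have dec_i : ∀ i, {i} ∈ dec_sequences_ending_in i := fun i => by
    simp [dec_sequences_ending_in, StrictAntiOn]
  -- Define the pair of labels: at index `i`, the pair is the maximum length of an increasing
  -- subsequence ending at `i`, paired with the maximum length of a decreasing subsequence ending
  -- at `i`.
  -- We call these labels `(a_i, b_i)`.
  let ab' : Fin n → ℕ × ℕ := by
    intro i
    apply
      (max' ((inc_sequences_ending_in i).image card) (Nonempty.image ⟨{i}, inc_i i⟩ _),
        max' ((dec_sequences_ending_in i).image card) (Nonempty.image ⟨{i}, dec_i i⟩ _))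
  -- Porting note: it costs many resources to unfold `ab'` so we obscure the definition:
  generalize hab : ab' = ab
  -- It now suffices to show that one of the labels is 'big' somewhere. In particular, if the
  -- first in the pair is more than `r` somewhere, then we have an increasing subsequence in our
  -- set, and if the second is more than `s` somewhere, then we have a decreasing subsequence.
  rsuffices ⟨i, hi⟩ : ∃ i, r < (ab i).1 ∨ s < (ab i).2
  · refine Or.imp ?_ ?_ hi
    on_goal 1 =>
      have : (ab i).1 ∈ image card (inc_sequences_ending_in i) := by
        simp only [← hab]; exact max'_mem _ (Nonempty.image ⟨{i}, inc_i i⟩ _)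
    on_goal 2 =>
      have : (ab i).2 ∈ image card (dec_sequences_ending_in i) := by
        simp only [← hab]; exact max'_mem _ (Nonempty.image ⟨{i}, dec_i i⟩ _)
    all_goals
      intro hi
      rw [mem_image] at this
      obtain ⟨t, ht₁, ht₂⟩ := this
      refine ⟨t, by rwa [ht₂], ?_⟩
      rw [mem_filter] at ht₁
      apply ht₁.2.2
  -- Show first that the pair of labels is unique.
  have : Injective ab := by
    simp only [← hab]
    apply Function.Injective.of_lt_imp_ne
    intro i j k q
    injection q with q₁ q₂
    -- We have two cases: `f i < f j` or `f j < f i`.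
    -- In the former we'll show `a_i < a_j`, and in the latter we'll show `b_i < b_j`.
    cases lt_or_gt_of_ne fun _ => ne_of_lt ‹i < j› (hf ‹f i = f j›)
    on_goal 1 =>
      apply ne_of_lt _ q₁
      have : (ab' i).1 ∈ image card (inc_sequences_ending_in i) := by exact max'_mem _ (Nonempty.image ⟨{i}, inc_i i⟩ _)
    on_goal 2 =>
      apply ne_of_lt _ q₂
      have : (ab' i).2 ∈ image card (dec_sequences_ending_in i) := by exact max'_mem _ (Nonempty.image ⟨{i}, dec_i i⟩ _)
    all_goals
      -- Reduce to showing there is a subsequence of length `a_i + 1` which ends at `j`.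
      rw [Nat.lt_iff_add_one_le]
      apply le_max'
      rw [mem_image] at this ⊢
      -- In particular we take the subsequence `t` of length `a_i` which ends at `i`, by definition
      -- of `a_i`
      rcases this with ⟨t, ht₁, ht₂⟩
      rw [mem_filter] at ht₁
      -- Ensure `t` ends at `i`.
      have : t.max = i := by simp only [ht₁.2.1]
      -- Now our new subsequence is given by adding `j` at the end of `t`.
      refine ⟨insert j t, ?_, ?_⟩
      -- First make sure it's valid, i.e., that this subsequence ends at `j` and is increasing
      · rw [mem_filter]
        refine ⟨?_, ?_, ?_⟩
        · rw [mem_powerset]; apply subset_univ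
        -- It ends at `j` since `i < j`.
        · convert max_insert (a := j) (s := t)
          rw [ht₁.2.1, max_eq_left]
          apply WithBot.coe_le_coe.mpr (le_of_lt ‹i < j›)
        -- To show it's increasing (i.e., `f` is monotone increasing on `t.insert j`), we do cases
        -- on what the possibilities could be - either in `t` or equals `j`.
        simp only [StrictMonoOn, StrictAntiOn, coe_insert, Set.mem_insert_iff, mem_coe]
        -- Most of the cases are just bashes.
        rintro x ⟨rfl | _⟩ y ⟨rfl | _⟩ _
        · apply (irrefl _ ‹j < j›).elim
        · exfalso
          apply not_le_of_gt (_root_.trans ‹i < j› ‹j < y›) (le_max_of_eq ‹y ∈ t› ‹t.max = i›)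
        · first
          | apply lt_of_le_of_lt _ ‹f i < f j›
          | apply lt_of_lt_of_le ‹f j < f i› _
          rcases lt_or_eq_of_le (le_max_of_eq ‹x ∈ t› ‹t.max = i›) with (_ | rfl)
          · apply le_of_lt (ht₁.2.2 ‹x ∈ t› (mem_of_max ‹t.max = i›) ‹x < i›)
          · rfl
        · apply ht₁.2.2 ‹x ∈ t› ‹y ∈ t› ‹x < y›
      -- Finally show that this new subsequence is one longer than the old one.
      · rw [card_insert_of_notMem, ht₂]
        intro
        apply not_le_of_gt ‹i < j› (le_max_of_eq ‹j ∈ t› ‹t.max = i›)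
  -- Finished both goals!
  -- Now that we have uniqueness of each label, it remains to do some counting to finish off.
  -- Suppose all the labels are small.
  by_contra! q
  -- Then the labels `(a_i, b_i)` all fit in the following set: `{ (x,y) | 1 ≤ x ≤ r, 1 ≤ y ≤ s }`
  let ran : Finset (ℕ × ℕ) := (range r).image Nat.succ ×ˢ (range s).image Nat.succ
  -- which we prove here.
  have : image ab univ ⊆ ran := by
    -- First some logical shuffling
    rintro ⟨x₁, x₂⟩
    simp only [ran, mem_image, exists_prop, mem_range, mem_univ, mem_product, true_and,
      Prod.ext_iff]
    rintro ⟨i, rfl, rfl⟩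
    specialize q i
    -- Show `1 ≤ a_i` and `1 ≤ b_i`, which is easy from the fact that `{i}` is an increasing and
    -- decreasing subsequence which we did right near the top.
    have z : 1 ≤ (ab i).1 ∧ 1 ≤ (ab i).2 := by
      simp only [← hab]
      constructor <;>
        · apply le_max'
          rw [mem_image]
          exact ⟨{i}, by solve_by_elim, card_singleton i⟩
    -- Need to get `a_i ≤ r`, here phrased as: there is some `a < r` with `a+1 = a_i`.
    exact ⟨⟨(ab i).1 - 1, by omega⟩, (ab i).2 - 1, by omega⟩
  -- To get our contradiction, it suffices to prove `n ≤ r * s`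
  apply not_le_of_gt hn
  -- Which follows from considering the cardinalities of the subset above, since `ab` is injective.
  simpa [ran, Nat.succ_injective, card_image_of_injective, ‹Injective ab›] using card_le_card this


end SWAux


namespace SWAux

lemma contains_of_chain_mono {n : ℕ} {F : Forest n} {k : ℕ} {v : Fin k → Fin n}
    (hanc : ∀ i j, i < j → F.Ancestor (v i) (v j)) (hmono : StrictMono v) :
    F.Contains ⟨k, Equiv.refl (Fin k)⟩ := by
  refine ⟨v, hanc, fun i j => ?_⟩
  simpa using hmono.lt_iff_lt.symm

lemma contains_of_chain_anti {n : ℕ} {F : Forest n} {l : ℕ} {v : Fin l → Fin n}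
    (hanc : ∀ i j, i < j → F.Ancestor (v i) (v j)) (hanti : StrictAnti v) :
    F.Contains ⟨l, Fin.revPerm⟩ := by
  refine ⟨v, hanc, fun i j => ?_⟩
  simp only [Fin.revPerm_apply]
  rw [Fin.rev_lt_rev, hanti.lt_iff_gt]

lemma no_chain {n : ℕ} {S : Set Pattern} {k l : ℕ}
    (hk : (⟨k, Equiv.refl (Fin k)⟩ : Pattern) ∈ S)
    (hl : (⟨l, Fin.revPerm⟩ : Pattern) ∈ S)
    {F : Forest n} (hF : F.AvoidsSet S)
    (c : Fin ((k - 1) * (l - 1) + 1) → Fin n)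
    (hc : ∀ i j, i < j → F.Ancestor (c i) (c j)) : False := by
  have hinj : Function.Injective c := by
    intro i j hij
    by_contra hne
    rcases lt_or_gt_of_ne (fun h : i = j => hne h) with h | h
    · exact anc_irrefl (hij ▸ hc i j h)
    · exact anc_irrefl (hij ▸ hc j i h)
  rcases erdos_szekeres (r := k - 1) (s := l - 1) (by omega) hinj with ⟨t, ht, hmono⟩ | ⟨t, ht, hanti⟩
  · obtain ⟨t', ht't, ht'⟩ := Finset.exists_subset_card_eq (show k ≤ t.card by omega)
    set e := t'.orderIsoOfFin ht' with he
    refine hF _ hk (contains_of_chain_mono (v := fun i => c (e i)) (fun i j hij => ?_) ?_)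
    · exact hc _ _ (by exact_mod_cast e.strictMono hij)
    · intro i j hij
      exact hmono (ht't (e i).2) (ht't (e j).2) (by exact_mod_cast e.strictMono hij)
  · obtain ⟨t', ht't, ht'⟩ := Finset.exists_subset_card_eq (show l ≤ t.card by omega)
    set e := t'.orderIsoOfFin ht' with he
    refine hF _ hl (contains_of_chain_anti (v := fun i => c (e i)) (fun i j hij => ?_) ?_)
    · exact hc _ _ (by exact_mod_cast e.strictMono hij)
    · intro i j hij
      exact hanti (ht't (e i).2) (ht't (e j).2) (by exact_mod_cast e.strictMono hij)

lemma lev_lt {n : ℕ} {S : Set Pattern} {k l : ℕ}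
    (hk : (⟨k, Equiv.refl (Fin k)⟩ : Pattern) ∈ S)
    (hl : (⟨l, Fin.revPerm⟩ : Pattern) ∈ S)
    {F : Forest n} (hF : F.AvoidsSet S) (v : Fin n) :
    lev F v < (k - 1) * (l - 1) + 1 := by
  by_contra hle
  push_neg at hle
  obtain ⟨c, hc, -⟩ := exists_chain (lev F v) v rfl
  have hMle : (k - 1) * (l - 1) + 1 ≤ lev F v + 1 := by omega
  exact no_chain hk hl hF (fun i => c (Fin.castLE hMle i))
    (fun i j hij => hc _ _ (by exact_mod_cast hij))

end SWAux

namespace SWAux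

/-- Parent functions together with a level function strictly increasing by one along parents. -/
def LP (n m : ℕ) : Type :=
  {q : (Fin n → Fin m) × (Fin n → Option (Fin n)) //
    ∀ v w : Fin n, q.2 v = some w → (q.1 v : ℕ) = (q.1 w : ℕ) + 1}

instance (n m : ℕ) : Finite (LP n m) := by unfold LP; infer_instance

lemma forestCount_le {S : Set Pattern} {k l : ℕ}
    (hk : (⟨k, Equiv.refl (Fin k)⟩ : Pattern) ∈ S)
    (hl : (⟨l, Fin.revPerm⟩ : Pattern) ∈ S) (n : ℕ) :
    forestCount S n ≤ Nat.card (LP n ((k - 1) * (l - 1) + 1)) := by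
  set m := (k - 1) * (l - 1) + 1 with hm
  refine Nat.card_le_card_of_injective
    (fun F => (⟨(fun v => ⟨lev F.1 v, lev_lt hk hl F.2 v⟩, F.1.1),
      fun v w h => by simp [lev_parent h]⟩ : LP n m)) ?_
  intro F G h
  have h2 : F.1.1 = G.1.1 := congrArg (fun q => q.1.2) h
  exact Subtype.ext (Subtype.ext h2)

def enc {X : Type*} (C : X → Prop) :
    {o : Option X // ∀ w, o = some w → C w} → Option {w : X // C w} := fun x =>
  match x with
  | ⟨none, _⟩ => none
  | ⟨some w, h⟩ => some ⟨w, h w rfl⟩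

lemma enc_inj {X : Type*} (C : X → Prop) : Function.Injective (enc C) := by
  rintro ⟨(_ | w1), h1⟩ ⟨(_ | w2), h2⟩ h <;> simp [enc] at h ⊢
  exact h

lemma card_option_subtype_le {X : Type*} [Finite X] (C : X → Prop) :
    Nat.card {o : Option X // ∀ w, o = some w → C w} ≤ 1 + Nat.card {w : X // C w} := by
  classical
  haveI := Fintype.ofFinite X
  refine le_trans (Nat.card_le_card_of_injective _ (enc_inj C)) ?_
  rw [Finite.card_option]
  omega

lemma card_LP_le (n m : ℕ) :
    Nat.card (LP n m) ≤
      ∑ lev : Fin n → Fin m, ∏ v : Fin n,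
        (1 + Nat.card {w : Fin n // (lev v : ℕ) = (lev w : ℕ) + 1}) := by
  classical
  have e1 := Equiv.subtypeProdEquivSigmaSubtype
    (fun (lev : Fin n → Fin m) (p : Fin n → Option (Fin n)) =>
      ∀ v w : Fin n, p v = some w → (lev v : ℕ) = (lev w : ℕ) + 1)
  have hcard : Nat.card (LP n m) = Nat.card
      ((lev : Fin n → Fin m) × {p : Fin n → Option (Fin n) //
        ∀ v w : Fin n, p v = some w → (lev v : ℕ) = (lev w : ℕ) + 1}) := Nat.card_congr e1
  rw [hcard]
  letI : ∀ lev : Fin n → Fin m, Fintype {p : Fin n → Option (Fin n) //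
      ∀ v w : Fin n, p v = some w → (lev v : ℕ) = (lev w : ℕ) + 1} :=
    fun lev => Fintype.ofFinite _
  rw [Nat.card_eq_fintype_card, Fintype.card_sigma]
  refine Finset.sum_le_sum fun lev _ => ?_
  rw [← Nat.card_eq_fintype_card]
  have e2 := Equiv.subtypePiEquivPi
    (p := fun (v : Fin n) (o : Option (Fin n)) =>
      ∀ w : Fin n, o = some w → (lev v : ℕ) = (lev w : ℕ) + 1)
  rw [Nat.card_congr e2, Nat.card_pi]
  exact Finset.prod_le_prod' fun v _ => card_option_subtype_le _

end SWAux

namespace SWAux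

noncomputable def tower (ε : ℝ) : ℕ → ℝ
  | 0 => 1 / ε
  | t + 1 => Real.exp (tower ε t) / ε

lemma tower_pos {ε : ℝ} (hε : 0 < ε) : ∀ t, 0 < tower ε t
  | 0 => by rw [tower]; positivity
  | t + 1 => by rw [tower]; positivity

lemma pow_le_factorial_mul_exp {x : ℝ} (hx : 0 ≤ x) (y : ℕ) :
    x ^ y ≤ (y.factorial : ℝ) * Real.exp x := by
  have h1 : x ^ y / (y.factorial : ℝ) ≤ ∑ i ∈ Finset.range (y + 1), x ^ i / (i.factorial : ℝ) :=
    Finset.single_le_sum (f := fun i => x ^ i / (i.factorial : ℝ))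
      (fun i _ => by positivity) (Finset.self_mem_range_succ y)
  have h3 := h1.trans (Real.sum_le_exp_of_nonneg hx (y + 1))
  rw [div_le_iff₀ (by positivity : (0:ℝ) < (y.factorial : ℝ))] at h3
  linarith [h3]

lemma per_lev (n m : ℕ) {ε : ℝ} (hε : 0 < ε) (lev : Fin n → Fin m) :
    (∏ v : Fin n, (1 + (Nat.card {w : Fin n // (lev v : ℕ) = (lev w : ℕ) + 1} : ℝ)))
      ≤ (n.factorial : ℝ) * Real.exp (∑ i : Fin m, tower ε (m - 1 - (i : ℕ))) * ε ^ n := by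
  classical
  set R : Fin m → ℝ := fun i => tower ε (m - 1 - (i : ℕ)) with hR
  have hRpos : ∀ i, 0 < R i := fun i => tower_pos hε _
  set sf : Fin m → ℝ := fun i => if h : (i : ℕ) + 1 < m then R ⟨(i : ℕ) + 1, h⟩ else 0 with hsf
  have hs : ∀ i, Real.exp (sf i) ≤ ε * R i := by
    intro i
    rw [hsf]; dsimp only
    split_ifs with h
    · have harith : m - 1 - (i : ℕ) = (m - 1 - ((i : ℕ) + 1)) + 1 := by omega
      have hRi : R i = Real.exp (R ⟨(i : ℕ) + 1, h⟩) / ε := by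
        rw [hR]; dsimp only; rw [harith, tower]
      rw [hRi, mul_div_cancel₀ _ (ne_of_gt hε)]
    · have harith : m - 1 - (i : ℕ) = 0 := by have := i.isLt; omega
      have hRi : R i = 1 / ε := by rw [hR]; dsimp only; rw [harith, tower]
      rw [hRi, mul_one_div, div_self (ne_of_gt hε), Real.exp_zero]
  -- the level counts
  set NcR : Fin m → ℕ := fun i => Nat.card {w : Fin n // (i : ℕ) = (lev w : ℕ) + 1} with hNcR
  set ν : Fin m → ℕ := fun i => (Finset.univ.filter (fun v => lev v = i)).card with hν
  have hνsum : ∑ i, ν i = n := by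
    rw [hν]
    have := Finset.card_eq_sum_card_fiberwise
      (f := lev) (s := Finset.univ) (t := Finset.univ) (fun v _ => Finset.mem_univ _)
    simpa using this.symm
  have key1 : ∀ f : Fin m → ℝ, ∏ v, f (lev v) = ∏ i, f i ^ ν i := by
    intro f
    rw [← Finset.prod_fiberwise' Finset.univ lev f]
    exact Finset.prod_congr rfl fun i _ => by rw [Finset.prod_const, hν]
  set L : Fin n → Option (Fin m) :=
    fun w => if h : (lev w : ℕ) + 1 < m then some ⟨(lev w : ℕ) + 1, h⟩ else none with hL
  set R' : Option (Fin m) → ℝ := fun o => o.elim 0 R with hR'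
  have hfib : ∀ i, (NcR i : ℕ) = (Finset.univ.filter (fun w => L w = some i)).card := by
    intro i
    rw [hNcR]; dsimp only
    rw [Nat.card_eq_fintype_card, Fintype.card_subtype]
    congr 1
    apply Finset.filter_congr
    intro w _
    rw [hL]; dsimp only
    constructor
    · intro hw
      have h : (lev w : ℕ) + 1 < m := hw ▸ i.isLt
      rw [dif_pos h]
      exact congrArg some (Fin.ext hw.symm)
    · intro hw
      by_cases h : (lev w : ℕ) + 1 < m
      · rw [dif_pos h] at hw
        have := congrArg Fin.val (Option.some_injective _ hw)
        simpa [eq_comm] using this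
      · rw [dif_neg h] at hw
        exact absurd hw (by simp)
  have hsum : ∑ i, R i * (NcR i : ℝ) = ∑ v, sf (lev v) := by
    have hLs : ∀ v, sf (lev v) = R' (L v) := by
      intro v
      rw [hL, hsf, hR']; dsimp only
      split_ifs with h <;> rfl
    calc ∑ i, R i * (NcR i : ℝ)
        = ∑ i, ∑ _w ∈ Finset.univ.filter (fun w => L w = some i), R i := by
          refine Finset.sum_congr rfl fun i _ => ?_
          rw [Finset.sum_const, hfib i, nsmul_eq_mul, mul_comm]
      _ = ∑ o : Option (Fin m), ∑ _w ∈ Finset.univ.filter (fun w => L w = o), R' o := by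
          rw [Fintype.sum_option]
          simp only [hR', Option.elim]
          rw [Finset.sum_const, smul_zero, zero_add]
      _ = ∑ v, R' (L v) := Finset.sum_fiberwise' Finset.univ L R'
      _ = ∑ v, sf (lev v) := by
          exact Finset.sum_congr rfl fun v _ => (hLs v).symm
  -- main chain
  have hP : (0:ℝ) < ∏ v, R (lev v) := Finset.prod_pos fun v _ => hRpos _
  rw [← mul_le_mul_iff_of_pos_right hP]
  have hNc : ∀ v, (Nat.card {w : Fin n // (lev v : ℕ) = (lev w : ℕ) + 1}) = NcR (lev v) :=
    fun v => rfl
  calc (∏ v, (1 + (Nat.card {w : Fin n // (lev v : ℕ) = (lev w : ℕ) + 1} : ℝ))) * ∏ v, R (lev v)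
      = ∏ v, (R (lev v) * (1 + (NcR (lev v) : ℝ))) := by
        rw [← Finset.prod_mul_distrib]
        exact Finset.prod_congr rfl fun v _ => by rw [hNc v, mul_comm]
    _ = ∏ i, (R i * (1 + (NcR i : ℝ))) ^ ν i := key1 (fun i => R i * (1 + (NcR i : ℝ)))
    _ ≤ ∏ i, ((ν i).factorial : ℝ) * Real.exp (R i * (1 + (NcR i : ℝ))) := by
        refine Finset.prod_le_prod
          (fun i _ => pow_nonneg (mul_nonneg (hRpos i).le (by positivity)) _) fun i _ => ?_
        exact pow_le_factorial_mul_exp (mul_nonneg (hRpos i).le (by positivity)) (ν i)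
    _ = (∏ i, ((ν i).factorial : ℝ)) * Real.exp (∑ i, R i * (1 + (NcR i : ℝ))) := by
        rw [Finset.prod_mul_distrib, Real.exp_sum]
    _ = (∏ i, ((ν i).factorial : ℝ)) * Real.exp (Finset.univ.sum R) * ∏ v, Real.exp (sf (lev v)) := by
        rw [mul_assoc, ← Real.exp_sum, ← Real.exp_add]
        congr 2
        have : ∀ i, R i * (1 + (NcR i : ℝ)) = R i + R i * (NcR i : ℝ) := fun i => by ring
        rw [Finset.sum_congr rfl fun i _ => this i, Finset.sum_add_distrib, hsum]
    _ ≤ (∏ i, ((ν i).factorial : ℝ)) * Real.exp (Finset.univ.sum R) * ∏ v, (ε * R (lev v)) := by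
        refine mul_le_mul_of_nonneg_left ?_ (by positivity)
        exact Finset.prod_le_prod (fun v _ => (Real.exp_pos _).le) fun v _ => hs _
    _ = (∏ i, ((ν i).factorial : ℝ)) * Real.exp (Finset.univ.sum R) * ε ^ n * ∏ v, R (lev v) := by
        rw [Finset.prod_mul_distrib, Finset.prod_const]
        simp [Finset.card_univ, mul_assoc]
    _ ≤ (n.factorial : ℝ) * Real.exp (Finset.univ.sum R) * ε ^ n * ∏ v, R (lev v) := by
        have hdvd := Nat.prod_factorial_dvd_factorial_sum Finset.univ ν
        rw [hνsum] at hdvd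
        have hle : (∏ i, (ν i).factorial) ≤ n.factorial :=
          Nat.le_of_dvd n.factorial_pos hdvd
        have : ((∏ i, (ν i).factorial : ℕ) : ℝ) ≤ (n.factorial : ℝ) := by exact_mod_cast hle
        push_cast at this
        refine mul_le_mul_of_nonneg_right (mul_le_mul_of_nonneg_right
          (mul_le_mul_of_nonneg_right this (Real.exp_pos _).le) (by positivity)) hP.le

end SWAux

namespace SWAux

lemma main_bound {S : Set Pattern} {k l : ℕ}
    (hk : (⟨k, Equiv.refl (Fin k)⟩ : Pattern) ∈ S)
    (hl : (⟨l, Fin.revPerm⟩ : Pattern) ∈ S) {ε : ℝ} (hε : 0 < ε) (n : ℕ) :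
    (forestCount S n : ℝ) ≤
      (((k - 1) * (l - 1) + 1 : ℕ) : ℝ) ^ n * (n.factorial : ℝ) *
        Real.exp (∑ i : Fin ((k - 1) * (l - 1) + 1),
          tower ε ((k - 1) * (l - 1) + 1 - 1 - (i : ℕ))) * ε ^ n := by
  classical
  set m := (k - 1) * (l - 1) + 1 with hm
  calc (forestCount S n : ℝ)
      ≤ (Nat.card (LP n m) : ℝ) := by exact_mod_cast forestCount_le hk hl n
    _ ≤ ((∑ lev : Fin n → Fin m, ∏ v : Fin n,
          (1 + Nat.card {w : Fin n // (lev v : ℕ) = (lev w : ℕ) + 1}) : ℕ) : ℝ) := by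
        exact_mod_cast card_LP_le n m
    _ = ∑ lev : Fin n → Fin m, ∏ v : Fin n,
          (1 + (Nat.card {w : Fin n // (lev v : ℕ) = (lev w : ℕ) + 1} : ℝ)) := by
        push_cast; rfl
    _ ≤ ∑ _lev : Fin n → Fin m,
          (n.factorial : ℝ) * Real.exp (∑ i : Fin m, tower ε (m - 1 - (i : ℕ))) * ε ^ n :=
        Finset.sum_le_sum fun lev _ => per_lev n m hε lev
    _ = ((m : ℝ) ^ n * ((n.factorial : ℝ) *
          Real.exp (∑ i : Fin m, tower ε (m - 1 - (i : ℕ))) * ε ^ n)) := by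
        rw [Finset.sum_const, nsmul_eq_mul]
        congr 1
        simp [Finset.card_univ]
    _ = _ := by ring

end SWAux
/-- If `S` contains an increasing pattern and a decreasing pattern, then the
forest Stanley–Wilf limit of `S` is `0`. -/
theorem forest_stanley_wilf_limit_zero (S : Set Pattern) (k l : ℕ)
    (hk : (⟨k, Equiv.refl (Fin k)⟩ : Pattern) ∈ S)
    (hl : (⟨l, Fin.revPerm⟩ : Pattern) ∈ S) :
    Tendsto (fun n : ℕ => (forestCount S n : ℝ) ^ ((n : ℝ)⁻¹) / n)
      atTop (nhds 0) := by
  classical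
  set m := (k - 1) * (l - 1) + 1 with hm
  have hm1 : 1 ≤ m := by omega
  rw [Metric.tendsto_atTop]
  intro δ hδ
  set ε : ℝ := δ / (3 * m) with hε_def
  have hε : 0 < ε := by
    rw [hε_def]
    have : (0:ℝ) < 3 * m := by positivity
    positivity
  set Kc : ℝ := ∑ i : Fin m, SWAux.tower ε (m - 1 - (i : ℕ)) with hKc
  have hKc0 : 0 ≤ Kc := Finset.sum_nonneg fun i _ => (SWAux.tower_pos hε _).le
  refine ⟨⌈Kc⌉₊ + 1, fun n hn => ?_⟩
  have hn1 : 1 ≤ n := by omega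
  have hn0 : (0:ℝ) < n := by exact_mod_cast hn1
  have hKn : Kc ≤ n := by
    calc Kc ≤ (⌈Kc⌉₊ : ℝ) := Nat.le_ceil _
      _ ≤ (n : ℝ) := by exact_mod_cast (by omega : ⌈Kc⌉₊ ≤ n)
  -- the count bound
  have h1 : (forestCount S n : ℝ) ≤ ((m : ℝ) * ε * n) ^ n * Real.exp Kc := by
    have h := SWAux.main_bound hk hl hε n
    rw [← hm, ← hKc] at h
    refine h.trans ?_
    have hfac : (n.factorial : ℝ) ≤ (n : ℝ) ^ n := by exact_mod_cast n.factorial_le_pow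
    calc (m : ℝ) ^ n * (n.factorial : ℝ) * Real.exp Kc * ε ^ n
        ≤ (m : ℝ) ^ n * (n : ℝ) ^ n * Real.exp Kc * ε ^ n := by
          refine mul_le_mul_of_nonneg_right (mul_le_mul_of_nonneg_right ?_
            (Real.exp_pos _).le) (by positivity)
          exact mul_le_mul_of_nonneg_left hfac (by positivity)
      _ = ((m : ℝ) * ε * n) ^ n * Real.exp Kc := by
          rw [mul_pow, mul_pow]
          ring
  -- rpow manipulation
  have hA : (0:ℝ) ≤ (m : ℝ) * ε * n := by positivity
  have h2 : (forestCount S n : ℝ) ^ ((n : ℝ)⁻¹) ≤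
      ((m : ℝ) * ε * n) * Real.exp (Kc * (n : ℝ)⁻¹) := by
    have hmono := Real.rpow_le_rpow (by positivity) h1 (by positivity : (0:ℝ) ≤ (n:ℝ)⁻¹)
    refine hmono.trans ?_
    rw [Real.mul_rpow (by positivity) (Real.exp_pos _).le]
    rw [← Real.rpow_natCast ((m : ℝ) * ε * n) n, ← Real.rpow_mul hA]
    rw [mul_inv_cancel₀ (by positivity : (n:ℝ) ≠ 0), Real.rpow_one]
    rw [Real.exp_mul]
  have hmpos : (0:ℝ) < (m : ℝ) := by exact_mod_cast hm1
  have hE1 : Real.exp (Kc * (n : ℝ)⁻¹) < 3 := by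
    have hle1 : Kc * (n : ℝ)⁻¹ ≤ 1 := by
      rw [← mul_inv_cancel₀ (ne_of_gt hn0)]
      exact mul_le_mul_of_nonneg_right hKn (by positivity)
    have h3 : Real.exp 1 < 3 := by
      have := Real.exp_one_lt_d9
      linarith
    exact lt_of_le_of_lt (Real.exp_le_exp.mpr hle1) h3
  have hx0 : (0:ℝ) ≤ (forestCount S n : ℝ) ^ ((n : ℝ)⁻¹) :=
    Real.rpow_nonneg (by positivity) _
  rw [Real.dist_eq, sub_zero, abs_of_nonneg (div_nonneg hx0 hn0.le)]
  calc (forestCount S n : ℝ) ^ ((n : ℝ)⁻¹) / n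
      ≤ ((m : ℝ) * ε * n * Real.exp (Kc * (n : ℝ)⁻¹)) / n := by gcongr
    _ = (m : ℝ) * ε * Real.exp (Kc * (n : ℝ)⁻¹) := by
        field_simp
    _ < (m : ℝ) * ε * 3 := by
        refine mul_lt_mul_of_pos_left hE1 (mul_pos hmpos hε)
    _ = δ := by
        rw [hε_def]
        field_simp
end

section
/- For S = {132, 231, 321}, the number of S-avoiding rooted labeled trees on [n] equals n! for all n ≥ 1; such trees are exactly those with arbitrary root label whose forest below the root is increasing. -/
open Filter

/-- The pattern 213 (one-line notation, as a permutation of `Fin 3`). -/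
noncomputable def p213 : Equiv.Perm (Fin 3) := Equiv.ofBijective ![1, 0, 2] (by decide)
/-- The pattern 231. -/
noncomputable def p231 : Equiv.Perm (Fin 3) := Equiv.ofBijective ![1, 2, 0] (by decide)
/-- The pattern 312. -/
noncomputable def p312 : Equiv.Perm (Fin 3) := Equiv.ofBijective ![2, 0, 1] (by decide)
/-- The pattern 321. -/
noncomputable def p321 : Equiv.Perm (Fin 3) := Equiv.ofBijective ![2, 1, 0] (by decide)
/-- The pattern 132. -/
noncomputable def p132 : Equiv.Perm (Fin 3) := Equiv.ofBijective ![0, 2, 1] (by decide)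

/-! ### Auxiliary development -/

/-- The pattern set `{132, 231, 321}`. -/
def PatS : Set Pattern := {⟨3, p132⟩, ⟨3, p231⟩, ⟨3, p321⟩}

/-- A forest is increasing away from the roots. -/
def Inc {n : ℕ} (F : Forest n) : Prop :=
  ∀ v w : Fin n, F.val w = some v → F.val v ≠ none → v < w

lemma anc_lt {n : ℕ} {F : Forest n} (hI : Inc F) {a b : Fin n} (h : F.Ancestor a b) :
    F.val a ≠ none → a < b := by
  induction h with
  | single h => exact fun ha => hI _ _ h ha
  | tail h₁ h₂ ih =>
      exact fun ha => lt_trans (hI _ _ h₂ ha) (ih (by rw [h₂]; simp))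

lemma anc_nonroot {n : ℕ} {F : Forest n} {a b : Fin n} (h : F.Ancestor a b) :
    F.val b ≠ none := by
  induction h with
  | single h => rw [h]; simp
  | tail _ _ ih => exact ih

lemma avoids_iff {n : ℕ} (F : Forest n) : F.AvoidsSet PatS ↔ Inc F := by
  have e132 : ∀ x : Fin 3, p132 x = ![0, 2, 1] x := fun _ => rfl
  have e231 : ∀ x : Fin 3, p231 x = ![1, 2, 0] x := fun _ => rfl
  have e321 : ∀ x : Fin 3, p321 x = ![2, 1, 0] x := fun _ => rfl
  have m2 : ∀ h : 2 < 3, (⟨2, h⟩ : Fin 3) = 2 := fun _ => rfl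
  constructor
  · intro hA v w hw hv
    by_contra hlt
    obtain ⟨d, hd⟩ := F.2
    have hvw : v ≠ w := fun h => by have := hd w v hw; rw [h] at this; omega
    have hwv : w < v := lt_of_le_of_ne (not_lt.1 hlt) (Ne.symm hvw)
    obtain ⟨u, hu⟩ := Option.ne_none_iff_exists'.1 hv
    have huv : u ≠ v := fun h => by have := hd v u hu; rw [h] at this; omega
    have huw : u ≠ w := fun h => by
      have h1 := hd v u hu; have h2 := hd w v hw; rw [h] at h1; omega
    have a1 : F.Ancestor u v := Relation.TransGen.single hu
    have a2 : F.Ancestor v w := Relation.TransGen.single hw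
    have a3 : F.Ancestor u w := a2.tail hu
    have hwv' : (w : ℕ) < v := hwv
    have anc : ∀ i j : Fin 3, i < j → F.Ancestor (![u, v, w] i) (![u, v, w] j) := by
      intro i j hij
      fin_cases i <;> fin_cases j <;>
        first
          | exact absurd hij (by decide)
          | assumption
    rcases lt_trichotomy u w with h1 | h1 | h1
    · have h1' : (u : ℕ) < w := h1
      refine hA ⟨3, p132⟩ (Set.mem_insert _ _) ⟨![u, v, w], anc, ?_⟩
      intro i j
      fin_cases i <;> fin_cases j <;>
        simp only [e132, m2, Fin.lt_def, Fin.isValue, Matrix.cons_val_zero,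
          Matrix.cons_val_one, Matrix.head_cons, Matrix.cons_val_two,
          Matrix.tail_cons, Fin.mk_zero, Fin.mk_one] <;> omega
    · exact huw h1
    · rcases lt_trichotomy u v with h2 | h2 | h2
      · have h1' : (w : ℕ) < u := h1
        have h2' : (u : ℕ) < v := h2
        refine hA ⟨3, p231⟩ (Set.mem_insert_of_mem _ (Set.mem_insert _ _))
          ⟨![u, v, w], anc, ?_⟩
        intro i j
        fin_cases i <;> fin_cases j <;>
          simp only [e231, m2, Fin.lt_def, Fin.isValue, Matrix.cons_val_zero,
            Matrix.cons_val_one, Matrix.head_cons, Matrix.cons_val_two,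
            Matrix.tail_cons, Fin.mk_zero, Fin.mk_one] <;> omega
      · exact huv h2
      · have h1' : (w : ℕ) < u := h1
        have h2' : (v : ℕ) < u := h2
        refine hA ⟨3, p321⟩
          (Set.mem_insert_of_mem _ (Set.mem_insert_of_mem _ rfl))
          ⟨![u, v, w], anc, ?_⟩
        intro i j
        fin_cases i <;> fin_cases j <;>
          simp only [e321, m2, Fin.lt_def, Fin.isValue, Matrix.cons_val_zero,
            Matrix.cons_val_one, Matrix.head_cons, Matrix.cons_val_two,
            Matrix.tail_cons, Fin.mk_zero, Fin.mk_one] <;> omega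
  · rintro hI π hπ ⟨vv, hanc, hord⟩
    have key : ∀ (vv : Fin 3 → Fin n),
        (∀ i j : Fin 3, i < j → F.Ancestor (vv i) (vv j)) → vv 2 < vv 1 → False := by
      intro vv hanc h21
      have h01 : F.Ancestor (vv 0) (vv 1) := hanc 0 1 (by decide)
      have h12 : F.Ancestor (vv 1) (vv 2) := hanc 1 2 (by decide)
      exact absurd (anc_lt hI h12 (anc_nonroot h01)) (not_lt.2 h21.le)
    rcases hπ with rfl | rfl | rfl
    · exact key vv hanc ((hord 2 1).1 (by decide))
    · exact key vv hanc ((hord 2 1).1 (by decide))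
    · exact key vv hanc ((hord 2 1).1 (by decide))

/-! ### The bijection for counting -/

/-- Parent of the `i`-th non-root vertex, given the choice datum `c`. -/
def par {m : ℕ} (r : Fin (m + 1)) (c : ∀ i : Fin m, Fin (i.1 + 1)) (i : Fin m) :
    Fin (m + 1) :=
  if h : (c i : ℕ) < i.1 then r.succAbove ⟨(c i : ℕ), h.trans i.isLt⟩ else r

/-- The parent function of the tree encoded by `(r, c)`. -/
def pf {m : ℕ} (r : Fin (m + 1)) (c : ∀ i : Fin m, Fin (i.1 + 1)) :
    Fin (m + 1) → Option (Fin (m + 1)) :=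
  fun v => (finSuccEquiv' r v).map (par r c)

lemma pf_root {m : ℕ} (r : Fin (m + 1)) (c : ∀ i : Fin m, Fin (i.1 + 1)) :
    pf r c r = none := by
  simp [pf, finSuccEquiv'_at]

lemma pf_succAbove {m : ℕ} (r : Fin (m + 1)) (c : ∀ i : Fin m, Fin (i.1 + 1)) (i : Fin m) :
    pf r c (r.succAbove i) = some (par r c i) := by
  simp [pf, finSuccEquiv'_succAbove]

lemma pf_eq_none_iff {m : ℕ} {r : Fin (m + 1)} {c : ∀ i : Fin m, Fin (i.1 + 1)}
    {v : Fin (m + 1)} : pf r c v = none ↔ v = r := by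
  rw [pf, Option.map_eq_none_iff, Equiv.apply_eq_iff_eq_symm_apply, finSuccEquiv'_symm_none]

lemma par_of_eq {m : ℕ} {r : Fin (m + 1)} {c : ∀ i : Fin m, Fin (i.1 + 1)} {i : Fin m}
    (h : (c i : ℕ) = i.1) : par r c i = r :=
  dif_neg (by omega)

lemma par_of_lt {m : ℕ} {r : Fin (m + 1)} {c : ∀ i : Fin m, Fin (i.1 + 1)} {i : Fin m}
    (h : (c i : ℕ) < i.1) {j : Fin m} (hj : (j : ℕ) = (c i : ℕ)) :
    par r c i = r.succAbove j := by
  rw [par, dif_pos h]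
  congr 1
  exact Fin.ext hj.symm

lemma pf_forest {m : ℕ} (r : Fin (m + 1)) (c : ∀ i : Fin m, Fin (i.1 + 1)) :
    IsForest (m + 1) (pf r c) := by
  refine ⟨fun v => if v = r then 0 else v.1 + 1, ?_⟩
  intro v w hvw
  have hvr : v ≠ r := by
    intro h; rw [h, pf_root] at hvw; exact nomatch hvw
  obtain ⟨i, hi⟩ := Fin.exists_succAbove_eq hvr
  rw [← hi, pf_succAbove] at hvw
  have hw : w = par r c i := (Option.some.inj hvw).symm
  subst hw
  show (if par r c i = r then 0 else (par r c i : ℕ) + 1) < if v = r then 0 else (v : ℕ) + 1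
  rw [if_neg hvr]
  by_cases h : (c i : ℕ) < i.1
  · rw [show par r c i = r.succAbove ⟨(c i : ℕ), h.trans i.isLt⟩ from dif_pos h,
      if_neg (Fin.succAbove_ne r _)]
    have h3 : (r.succAbove ⟨(c i : ℕ), h.trans i.isLt⟩ : ℕ) < (r.succAbove i : ℕ) :=
      Fin.succAbove_lt_succAbove_iff.2 (by simp [Fin.lt_def, h])
    rw [← hi]
    omega
  · rw [show par r c i = r from dif_neg h, if_pos rfl]
    omega

lemma pf_inc {m : ℕ} (r : Fin (m + 1)) (c : ∀ i : Fin m, Fin (i.1 + 1)) :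
    Inc (⟨pf r c, pf_forest r c⟩ : Forest (m + 1)) := by
  intro x w hw hx
  have hxr : x ≠ r := fun h => hx (by rw [h]; exact pf_root r c)
  have hwr : w ≠ r := by
    intro h; rw [h] at hw
    rw [show (⟨pf r c, pf_forest r c⟩ : Forest (m+1)).val = pf r c from rfl, pf_root] at hw
    exact nomatch hw
  obtain ⟨i, hi⟩ := Fin.exists_succAbove_eq hwr
  rw [show (⟨pf r c, pf_forest r c⟩ : Forest (m+1)).val = pf r c from rfl] at hw
  rw [← hi, pf_succAbove] at hw
  have hx2 : x = par r c i := (Option.some.inj hw).symm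
  unfold par at hx2
  split at hx2
  · next h =>
    rw [hx2, ← hi]
    exact Fin.succAbove_lt_succAbove_iff.2 (by simp [Fin.lt_def, h])
  · exact absurd hx2 hxr

/-- The encoding map. -/
noncomputable def toTree (m : ℕ) (x : Fin (m + 1) × ∀ i : Fin m, Fin (i.1 + 1)) :
    {F : Forest (m + 1) // F.IsTree ∧ F.AvoidsSet PatS} :=
  ⟨⟨pf x.1 x.2, pf_forest x.1 x.2⟩,
    ⟨x.1, pf_root x.1 x.2, fun _ hy => pf_eq_none_iff.1 hy⟩,
    (avoids_iff _).2 (pf_inc x.1 x.2)⟩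

/-- Decoding a parent value back into a choice datum. -/
def dec {m : ℕ} (r : Fin (m + 1)) (o : Option (Fin (m + 1))) (i : Fin m) : Fin (i.1 + 1) :=
  (finSuccEquiv' r (o.getD r)).elim ⟨i.1, Nat.lt_succ_self _⟩
    (fun j => ⟨min j.1 i.1, Nat.lt_succ_of_le (Nat.min_le_right _ _)⟩)

lemma dec_root {m : ℕ} (r : Fin (m + 1)) (i : Fin m) :
    dec r (some r) i = ⟨i.1, Nat.lt_succ_self _⟩ := by
  simp [dec, finSuccEquiv'_at]

lemma dec_succAbove {m : ℕ} (r : Fin (m + 1)) (j : Fin m) (i : Fin m) :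
    dec r (some (r.succAbove j)) i
      = ⟨min j.1 i.1, Nat.lt_succ_of_le (Nat.min_le_right _ _)⟩ := by
  simp [dec, finSuccEquiv'_succAbove]

lemma toTree_bij (m : ℕ) : Function.Bijective (toTree m) := by
  constructor
  · rintro ⟨r, c⟩ ⟨r', c'⟩ h
    have hpf : pf r c = pf r' c' := congrArg (fun F => F.1.1) h
    have hr : r = r' := by
      have : pf r' c' r = none := by rw [← hpf]; exact pf_root r c
      exact pf_eq_none_iff.1 this
    subst hr
    have hc : c = c' := by
      funext i
      have h2 : par r c i = par r c' i := by
        have := pf_succAbove r c i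
        rw [hpf, pf_succAbove] at this
        exact (Option.some.inj this).symm
      by_cases h3 : (c i : ℕ) < i.1 <;> by_cases h4 : (c' i : ℕ) < i.1
      · rw [show par r c i = r.succAbove ⟨(c i : ℕ), h3.trans i.isLt⟩ from dif_pos h3,
          show par r c' i = r.succAbove ⟨(c' i : ℕ), h4.trans i.isLt⟩ from dif_pos h4] at h2
        have := Fin.succAbove_right_injective h2
        apply Fin.ext
        simpa [Fin.ext_iff] using this
      · rw [show par r c i = r.succAbove ⟨(c i : ℕ), h3.trans i.isLt⟩ from dif_pos h3,
          show par r c' i = r from dif_neg h4] at h2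
        exact absurd h2 (Fin.succAbove_ne r _)
      · rw [show par r c i = r from dif_neg h3,
          show par r c' i = r.succAbove ⟨(c' i : ℕ), h4.trans i.isLt⟩ from dif_pos h4] at h2
        exact absurd h2.symm (Fin.succAbove_ne r _)
      · apply Fin.ext
        have := (c i).isLt
        have := (c' i).isLt
        omega
    rw [hc]
  · rintro ⟨F, hT, hA⟩
    obtain ⟨r, hr, hun⟩ := hT
    have hI : Inc F := (avoids_iff F).1 hA
    have hnr : ∀ v : Fin (m + 1), v ≠ r → F.val v ≠ none := fun v hv h => hv (hun v h)
    refine ⟨⟨r, fun i => dec r (F.val (r.succAbove i)) i⟩, ?_⟩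
    apply Subtype.ext
    apply Subtype.ext
    funext v
    show pf r (fun i => dec r (F.val (r.succAbove i)) i) v = F.val v
    by_cases hv : v = r
    · rw [hv, pf_root, hr]
    · obtain ⟨i, hi⟩ := Fin.exists_succAbove_eq hv
      obtain ⟨u, hu⟩ := Option.ne_none_iff_exists'.1 (hnr v hv)
      rw [← hi, pf_succAbove, hi, hu]
      congr 1
      rw [← hi] at hu
      have hci : dec r (F.val (r.succAbove i)) i = dec r (some u) i := by rw [hu]
      by_cases hur : u = r
      · subst hur
        refine par_of_eq ?_
        rw [hci, dec_root]
      · obtain ⟨j, hj⟩ := Fin.exists_succAbove_eq hur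
        have hlt : u < r.succAbove i := hI u (r.succAbove i) hu (hnr u hur)
        have hji' : j.1 < i.1 := by
          have : r.succAbove j < r.succAbove i := by rw [hj]; exact hlt
          exact Fin.succAbove_lt_succAbove_iff.1 this
        have hcv : (dec r (F.val (r.succAbove i)) i : ℕ) = j.1 := by
          rw [hci, ← hj, dec_succAbove]
          simpa using Nat.min_eq_left hji'.le
        rw [par_of_lt (by omega) (j := j) (by omega)]
        exact hj

lemma card_aux (m : ℕ) :
    Nat.card {F : Forest (m + 1) // F.IsTree ∧ F.AvoidsSet PatS}
      = Nat.factorial (m + 1) := by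
  rw [← Nat.card_eq_of_bijective _ (toTree_bij m)]
  rw [Nat.card_prod, Nat.card_pi]
  simp only [Nat.card_eq_fintype_card, Fintype.card_fin]
  rw [Fin.prod_univ_eq_prod_range (fun x => x + 1) m,
    Finset.prod_range_add_one_eq_factorial, Nat.factorial_succ]

/-- For `S = {132, 231, 321}`: the number of `S`-avoiding trees on `[n]` is
`n!` for `n ≥ 1`, and the `S`-avoiding trees are exactly those whose forest
below the root is increasing (every non-root parent has a smaller label than
its children). -/
theorem treeCount_132_231_321 :
    (∀ n : ℕ, 1 ≤ n →
      treeCount {⟨3, p132⟩, ⟨3, p231⟩, ⟨3, p321⟩} n = Nat.factorial n) ∧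
    (∀ n : ℕ, ∀ F : Forest n, F.IsTree →
      (F.AvoidsSet {⟨3, p132⟩, ⟨3, p231⟩, ⟨3, p321⟩} ↔
        ∀ v w : Fin n, F.val w = some v → F.val v ≠ none → v < w)) := by
  constructor
  · intro n hn
    obtain ⟨m, rfl⟩ : ∃ m, n = m + 1 := ⟨n - 1, by omega⟩
    exact card_aux m
  · intro n F _
    exact avoids_iff F
end

section
/- For S = {132, 231, 321}, the exponential generating functions are T(x) = x/(1−x) for trees and F(x) = e^{x/(1−x)} for forests, and lim_{n→∞} f_n^{1/n}/n = 1/e. -/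
open Filter

section Aux
open Filter


-- new stuff
def LocalCond (n : ℕ) (p : Fin n → Option (Fin n)) : Prop :=
  ∀ v w : Fin n, p v = some w → p w = none ∨ w < v

abbrev S3 : Set Pattern := {⟨3, p132⟩, ⟨3, p231⟩, ⟨3, p321⟩}

lemma transGen_nonroot {n : ℕ} {p : Fin n → Option (Fin n)} {b c : Fin n}
    (h : Relation.TransGen (fun x y : Fin n => p x = some y) c b) :
    ∃ u, p c = some u := by
  rcases Relation.TransGen.head'_iff.mp h with ⟨d, h1, _⟩
  exact ⟨_, h1⟩

lemma localCond_chain_lt {n : ℕ} {p : Fin n → Option (Fin n)} (hp : LocalCond n p)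
    {b c : Fin n} (h : Relation.TransGen (fun x y : Fin n => p x = some y) c b)
    (hb : p b ≠ none) : b < c := by
  induction h using Relation.TransGen.head_induction_on with
  | single h1 =>
    rcases hp _ _ h1 with h2 | h2
    · exact absurd h2 hb
    · exact h2
  | head h1 h2 ih =>
    obtain ⟨u, hu⟩ := transGen_nonroot h2
    rcases hp _ _ h1 with h3 | h3
    · rw [h3] at hu; cases hu
    · exact lt_trans ih h3

lemma forest_chain_ne {n : ℕ} {p : Fin n → Option (Fin n)} (hF : IsForest n p)
    {b c : Fin n} (h : Relation.TransGen (fun x y : Fin n => p x = some y) c b) :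
    b ≠ c := by
  obtain ⟨d, hd⟩ := hF
  have : d b < d c := by
    induction h with
    | single h1 => exact hd _ _ h1
    | tail h1 h2 ih => exact lt_trans (hd _ _ h2) ih
  intro he; rw [he] at this; exact lt_irrefl _ this

lemma not_contains_of_localCond {n : ℕ} (F : Forest n) (hp : LocalCond n F.val)
    (σ : Equiv.Perm (Fin 3)) (hσ : σ 2 < σ 1) : ¬ F.Contains ⟨3, σ⟩ := by
  rintro ⟨vec, hanc, hord⟩
  have h01 : F.Ancestor (vec 0) (vec 1) := hanc 0 1 (show (0:Fin 3) < 1 by decide)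
  have h12 : F.Ancestor (vec 1) (vec 2) := hanc 1 2 (show (1:Fin 3) < 2 by decide)
  have h21 : vec 2 < vec 1 := (hord 2 1).mp hσ
  obtain ⟨u, hu⟩ := transGen_nonroot h01
  have h12' : vec 1 < vec 2 := localCond_chain_lt hp h12 (by simp [hu])
  exact absurd h12' (lt_asymm h21)

lemma avoids_iff_localCond {n : ℕ} (F : Forest n) :
    F.AvoidsSet S3 ↔ LocalCond n F.val := by
  constructor
  · intro h v w hvw
    by_contra hcon
    push_neg at hcon
    obtain ⟨hw, hwv⟩ := hcon
    obtain ⟨u, hu⟩ := Option.ne_none_iff_exists'.mp hw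
    have awv : F.Ancestor w v := Relation.TransGen.single hvw
    have auw : F.Ancestor u w := Relation.TransGen.single hu
    have auv : F.Ancestor u v := Relation.TransGen.tail awv hu
    have hvw' : v < w := lt_of_le_of_ne hwv (forest_chain_ne F.prop awv).symm
    have huw : u ≠ w := forest_chain_ne F.prop auw
    have huv : u ≠ v := forest_chain_ne F.prop auv
    have anc : ∀ i j : Fin 3, i < j → F.Ancestor (![u,w,v] i) (![u,w,v] j) := by
      intro i j hij
      fin_cases i <;> fin_cases j <;> simp_all <;>
        first | exact auw | exact auv | exact awv
    rcases lt_or_gt_of_ne huv with h1 | h1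
    · exact h ⟨3, p132⟩ (by simp [S3]) ⟨![u,w,v], anc, by
        intro i j
        fin_cases i <;> fin_cases j <;>
          simp [p132, Equiv.ofBijective] <;> omega⟩
    · rcases lt_or_gt_of_ne huw with h2 | h2
      · exact h ⟨3, p231⟩ (by simp [S3]) ⟨![u,w,v], anc, by
          intro i j
          fin_cases i <;> fin_cases j <;>
            simp [p231, Equiv.ofBijective] <;> omega⟩
      · exact h ⟨3, p321⟩ (by simp [S3]) ⟨![u,w,v], anc, by
          intro i j
          fin_cases i <;> fin_cases j <;>
            simp [p321, Equiv.ofBijective] <;> omega⟩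
  · intro hp π hπ
    rcases hπ with h | h | h <;> subst h
    · exact not_contains_of_localCond F hp p132
        (by simp [p132, Equiv.ofBijective])
    · exact not_contains_of_localCond F hp p231
        (by simp [p231, Equiv.ofBijective])
    · exact not_contains_of_localCond F hp p321
        (by simp [p321, Equiv.ofBijective])

def forestOfLocal {n : ℕ} (p : {q : Fin n → Option (Fin n) // LocalCond n q}) : Forest n :=
  ⟨p.val, ⟨fun v => if p.val v = none then 0 else (v : ℕ) + 1, by
    intro v w hvw
    have hv : ¬ p.val v = none := by simp [hvw]
    beta_reduce
    rw [if_neg hv]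
    rcases p.prop v w hvw with h | h
    · rw [if_pos h]; omega
    · have h' : (w : ℕ) < (v : ℕ) := h
      split <;> omega⟩⟩

def avoidEquiv (n : ℕ) : {F : Forest n // F.AvoidsSet S3} ≃
    {q : Fin n → Option (Fin n) // LocalCond n q} where
  toFun F := ⟨F.val.val, (avoids_iff_localCond F.val).mp F.prop⟩
  invFun p := ⟨forestOfLocal p, (avoids_iff_localCond _).mpr p.prop⟩
  left_inv F := by ext : 2 <;> rfl
  right_inv p := rfl

instance (n : ℕ) : DecidablePred (LocalCond n) := fun _ =>
  Fintype.decidableForallFintype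
section CNT
open Finset
def rootsF {n : ℕ} (p : Fin n → Option (Fin n)) : Finset (Fin n) :=
  univ.filter (fun v => p v = none)

lemma fiber_eq_piFinset {n : ℕ} (R : Finset (Fin n)) :
    (univ.filter fun p : Fin n → Option (Fin n) => LocalCond n p ∧ rootsF p = R) =
    Fintype.piFinset (fun v => if v ∈ R then {none} else
      ((R ∪ (univ \ R).filter (· < v)).image some)) := by
  ext p
  simp only [mem_filter, mem_univ, true_and, Fintype.mem_piFinset]
  constructor
  · rintro ⟨hL, hR⟩ v
    by_cases hv : v ∈ R
    · have : p v = none := by rw [← hR] at hv; simpa [rootsF] using hv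
      simp [hv, this]
    · have hv' : p v ≠ none := by
        intro h
        exact hv (hR ▸ (by simp [rootsF, h] : v ∈ rootsF p))
      obtain ⟨w, hw⟩ := Option.ne_none_iff_exists'.mp hv'
      rw [if_neg hv, hw]
      rw [mem_image]
      refine ⟨w, ?_, rfl⟩
      rw [mem_union]
      rcases hL v w hw with h | h
      · left; rw [← hR]; simp [rootsF, h]
      · by_cases hwR : w ∈ R
        · exact Or.inl hwR
        · right; simp [mem_filter, mem_sdiff, hwR, h]
  · intro h
    have hroot : ∀ v ∈ R, p v = none := by
      intro v hv; have := h v; rw [if_pos hv, mem_singleton] at this; exact this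
    have hnonroot : ∀ v, v ∉ R → ∃ w, p v = some w ∧ (w ∈ R ∨ (w ∉ R ∧ w < v)) := by
      intro v hv
      have := h v
      rw [if_neg hv, mem_image] at this
      obtain ⟨w, hw, hpw⟩ := this
      rw [mem_union] at hw
      refine ⟨w, hpw.symm, ?_⟩
      rcases hw with h1 | h1
      · exact Or.inl h1
      · rw [mem_filter, Finset.mem_sdiff] at h1
        exact Or.inr ⟨h1.1.2, h1.2⟩
    constructor
    · intro v w hvw
      by_cases hv : v ∈ R
      · rw [hroot v hv] at hvw; cases hvw
      · obtain ⟨w', hw', hcase⟩ := hnonroot v hv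
        rw [hvw] at hw'; injection hw' with hw'; subst hw'
        rcases hcase with h1 | h1
        · exact Or.inl (hroot w h1)
        · exact Or.inr h1.2
    · ext v
      simp only [rootsF, mem_filter, mem_univ, true_and]
      constructor
      · intro hv
        by_contra hvR
        obtain ⟨w, hw, _⟩ := hnonroot v hvR
        rw [hv] at hw; cases hw
      · exact hroot v

lemma fiber_card {n : ℕ} (R : Finset (Fin n)) :
    (univ.filter fun p : Fin n → Option (Fin n) =>
      LocalCond n p ∧ rootsF p = R).card
      = ∏ v ∈ univ \ R, (R.card + ((univ \ R).filter (· < v)).card) := by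
  rw [fiber_eq_piFinset, Fintype.card_piFinset]
  rw [← prod_filter_mul_prod_filter_not univ (· ∈ R)]
  have h1 : ∏ v ∈ univ.filter (· ∈ R), (if v ∈ R then ({none} : Finset (Option (Fin n))) else
      ((R ∪ (univ \ R).filter (· < v)).image some)).card = 1 := by
    apply prod_eq_one
    intro v hv
    rw [mem_filter] at hv
    rw [if_pos hv.2]
    rfl
  rw [h1, one_mul]
  have h2 : univ.filter (fun v : Fin n => ¬ v ∈ R) = univ \ R := by
    rw [sdiff_eq_filter]
  rw [h2]
  apply prod_congr rfl
  intro v hv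
  rw [Finset.mem_sdiff] at hv
  rw [if_neg hv.2, card_image_of_injective _ (Option.some_injective _),
    card_union_of_disjoint]
  exact disjoint_left.mpr fun a ha hb => by
    rw [mem_filter, Finset.mem_sdiff] at hb; exact hb.1.2 ha

lemma prod_rank {n : ℕ} : ∀ (m : ℕ) (T : Finset (Fin n)), T.card = m → ∀ k : ℕ,
    ∏ v ∈ T, (k + (T.filter (· < v)).card) = k.ascFactorial m := by
  intro m
  induction m with
  | zero =>
    intro T hT k
    rw [card_eq_zero.mp hT]
    simp [Nat.ascFactorial]
  | succ m ih =>
    intro T hT k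
    have hne : T.Nonempty := by rw [← card_pos, hT]; omega
    set M := T.max' hne with hM
    have hMem : M ∈ T := T.max'_mem hne
    have hfilt : T.filter (· < M) = T.erase M := by
      ext x
      simp only [mem_filter, mem_erase]
      constructor
      · rintro ⟨hx, hlt⟩; exact ⟨ne_of_lt hlt, hx⟩
      · rintro ⟨hne', hx⟩; exact ⟨hx, lt_of_le_of_ne (T.le_max' x hx) hne'⟩
    have hcard : (T.erase M).card = m := by
      rw [card_erase_of_mem hMem, hT]; rfl
    rw [← Finset.mul_prod_erase T _ hMem, hfilt, hcard]
    have hstep : ∀ v ∈ T.erase M, (k + (T.filter (· < v)).card)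
        = (k + ((T.erase M).filter (· < v)).card) := by
      intro v hv
      congr 2
      ext x
      simp only [mem_filter, mem_erase]
      constructor
      · rintro ⟨hx, hlt⟩
        refine ⟨⟨?_, hx⟩, hlt⟩
        rintro rfl
        exact absurd (T.le_max' v (mem_of_mem_erase hv)) (not_le.mpr hlt)
      · rintro ⟨⟨_, hx⟩, hlt⟩; exact ⟨hx, hlt⟩
    rw [Finset.prod_congr rfl hstep, ih _ hcard k, Nat.ascFactorial_succ]

lemma fiber_card' {n : ℕ} (R : Finset (Fin n)) :
    (univ.filter fun p : Fin n → Option (Fin n) =>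
      LocalCond n p ∧ rootsF p = R).card = (R.card).ascFactorial (n - R.card) := by
  rw [fiber_card R, prod_rank (n - R.card) (univ \ R) ?_ R.card]
  rw [card_sdiff_of_subset (subset_univ R), card_univ, Fintype.card_fin]

lemma card_localCond (n : ℕ) :
    (univ.filter fun p : Fin n → Option (Fin n) => LocalCond n p).card
      = ∑ k ∈ range (n + 1), n.choose k * k.ascFactorial (n - k) := by
  rw [card_eq_sum_card_fiberwise (f := rootsF) (t := (univ : Finset (Fin n)).powerset)
    (fun p _ => mem_powerset.mpr (subset_univ _))]
  have h1 : ∀ R ∈ (univ : Finset (Fin n)).powerset,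
      ((univ.filter fun p : Fin n → Option (Fin n) => LocalCond n p).filter
        fun p => rootsF p = R).card = (R.card).ascFactorial (n - R.card) := by
    intro R _
    rw [filter_filter]
    exact fiber_card' R
  rw [sum_congr rfl h1]
  have := Finset.sum_powerset_apply_card (fun k => k.ascFactorial (n - k))
    (x := (univ : Finset (Fin n)))
  rw [this]
  rw [card_univ, Fintype.card_fin]
  apply sum_congr rfl
  intro k _
  rw [smul_eq_mul]

lemma card_localCond_tree (n : ℕ) :
    (univ.filter fun p : Fin n → Option (Fin n) =>
      LocalCond n p ∧ (rootsF p).card = 1).card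
      = n.choose 1 * Nat.ascFactorial 1 (n - 1) := by
  rw [card_eq_sum_card_fiberwise (f := rootsF)
    (t := Finset.powersetCard 1 (univ : Finset (Fin n)))
    (fun p hp => by
      rw [Finset.mem_coe, mem_filter] at hp
      exact (Finset.mem_powersetCard_univ).mpr hp.2.2)]
  have h1 : ∀ R ∈ Finset.powersetCard 1 (univ : Finset (Fin n)),
      ((univ.filter fun p : Fin n → Option (Fin n) =>
        LocalCond n p ∧ (rootsF p).card = 1).filter fun p => rootsF p = R).card
        = Nat.ascFactorial 1 (n - 1) := by
    intro R hR
    have hRc : R.card = 1 := (Finset.mem_powersetCard_univ).mp hR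
    rw [filter_filter]
    have : (univ.filter fun p : Fin n → Option (Fin n) =>
        (LocalCond n p ∧ (rootsF p).card = 1) ∧ rootsF p = R)
        = (univ.filter fun p : Fin n → Option (Fin n) =>
        LocalCond n p ∧ rootsF p = R) := by
      apply filter_congr
      intro p _
      constructor
      · rintro ⟨⟨h1, _⟩, h2⟩; exact ⟨h1, h2⟩
      · rintro ⟨h1, h2⟩; exact ⟨⟨h1, by rw [h2, hRc]⟩, h2⟩
    rw [this, fiber_card' R, hRc]
  rw [sum_congr rfl h1, sum_const, Finset.card_powersetCard, card_univ,
    Fintype.card_fin, smul_eq_mul]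

end CNT
open Finset

lemma isTree_iff {n : ℕ} (p : Fin n → Option (Fin n)) :
    (∃! v, p v = none) ↔ (rootsF p).card = 1 := by
  rw [card_eq_one]
  constructor
  · rintro ⟨v, hv, hu⟩
    refine ⟨v, ?_⟩
    ext x
    simp only [rootsF, mem_filter, mem_univ, true_and, mem_singleton]
    exact ⟨fun h => hu x h, fun h => h ▸ hv⟩
  · rintro ⟨a, ha⟩
    have h1 : ∀ x, p x = none ↔ x = a := by
      intro x
      constructor
      · intro h
        have hx : x ∈ rootsF p := by simp [rootsF, h]
        rw [ha, mem_singleton] at hx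
        exact hx
      · intro h
        subst h
        have hx : x ∈ ({x} : Finset (Fin n)) := mem_singleton_self x
        rw [← ha] at hx
        simpa [rootsF] using hx
    exact ⟨a, (h1 a).mpr rfl, fun y hy => (h1 y).mp hy⟩

def treeEquiv (n : ℕ) : {F : Forest n // F.IsTree ∧ F.AvoidsSet S3} ≃
    {q : Fin n → Option (Fin n) // LocalCond n q ∧ (rootsF q).card = 1} where
  toFun F := ⟨F.val.val, (avoids_iff_localCond F.val).mp F.prop.2,
    (isTree_iff _).mp F.prop.1⟩
  invFun q := ⟨forestOfLocal ⟨q.val, q.prop.1⟩, (isTree_iff _).mpr q.prop.2,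
    (avoids_iff_localCond _).mpr q.prop.1⟩
  left_inv F := by ext : 2 <;> rfl
  right_inv q := rfl

lemma forestCount_eq (n : ℕ) :
    forestCount S3 n = ∑ k ∈ range (n + 1), n.choose k * k.ascFactorial (n - k) := by
  rw [forestCount, Nat.card_congr (avoidEquiv n), Nat.card_eq_fintype_card,
    Fintype.card_subtype, card_localCond]

lemma treeCount_eq (n : ℕ) :
    treeCount S3 n = if n = 0 then 0 else n.factorial := by
  rw [treeCount, Nat.card_congr (treeEquiv n), Nat.card_eq_fintype_card,
    Fintype.card_subtype, card_localCond_tree]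
  cases n with
  | zero => rfl
  | succ m =>
    rw [Nat.choose_one_right, if_neg (Nat.succ_ne_zero m), Nat.succ_sub_one,
      Nat.one_ascFactorial, Nat.factorial_succ]



-- nat identity
lemma asc_fact_aux (k m : ℕ) : k.factorial * (k+1).ascFactorial m = (k + m).factorial :=
  Nat.factorial_mul_ascFactorial k m

lemma key_nat_id {n k : ℕ} (hk : k ≤ n) :
    (n+1).choose (k+1) * (k+1).ascFactorial (n-k) * (k+1).factorial * (k.factorial * (n-k).factorial)
      = n.choose k * (n+1).factorial * (k.factorial * (n-k).factorial) := by
  have h1 : k.factorial * (k+1).ascFactorial (n-k) = n.factorial := by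
    rw [asc_fact_aux, Nat.add_sub_cancel' hk]
  have h2 : (n+1).choose (k+1) * (k+1).factorial * ((n+1)-(k+1)).factorial = (n+1).factorial :=
    Nat.choose_mul_factorial_mul_factorial (Nat.succ_le_succ hk)
  have h3 : n.choose k * k.factorial * (n-k).factorial = n.factorial :=
    Nat.choose_mul_factorial_mul_factorial hk
  have h4 : (n+1) - (k+1) = n - k := by omega
  rw [h4] at h2
  calc (n+1).choose (k+1) * (k+1).ascFactorial (n-k) * (k+1).factorial
        * (k.factorial * (n-k).factorial)
      = ((n+1).choose (k+1) * (k+1).factorial * (n-k).factorial)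
        * (k.factorial * (k+1).ascFactorial (n-k)) := by ring
    _ = (n+1).factorial * n.factorial := by rw [h1, h2]
    _ = n.choose k * (n+1).factorial * (k.factorial * (n-k).factorial) := by
        rw [← h3]; ring

lemma key_real_id {n k : ℕ} (hk : k ≤ n) :
    ((n+1).choose (k+1) * (k+1).ascFactorial (n-k) : ℝ) / (n+1).factorial
      = (n.choose k : ℝ) / (k+1).factorial := by
  rw [div_eq_div_iff (by positivity) (by positivity)]
  have h := key_nat_id hk
  have h5 : 0 < k.factorial * (n-k).factorial := by positivity
  have := Nat.eq_of_mul_eq_mul_right h5 h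
  exact_mod_cast congrArg (Nat.cast : ℕ → ℝ) this

def fseq (n : ℕ) : ℕ := ∑ k ∈ range (n+1), n.choose k * k.ascFactorial (n-k)

lemma fseq_succ_div (n : ℕ) : (fseq (n+1) : ℝ) / (n+1).factorial
    = ∑ k ∈ range (n+1), (n.choose k : ℝ) / (k+1).factorial := by
  rw [fseq, Finset.sum_range_succ' (fun j => (n+1).choose j * j.ascFactorial (n+1-j)) (n+1)]
  simp only [Nat.choose_zero_right, Nat.sub_zero, one_mul]
  rw [show Nat.ascFactorial 0 (n+1) = 0 from Nat.zero_ascFactorial n, add_zero]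
  push_cast
  rw [Finset.sum_div]
  apply Finset.sum_congr rfl
  intro k hk
  rw [Finset.mem_range] at hk
  have hk' : k ≤ n := by omega
  have := key_real_id hk'
  push_cast at this ⊢
  exact this

lemma sum_sq_le_sq_sum {s : Finset ℕ} {a : ℕ → ℝ} (ha : ∀ k ∈ s, 0 ≤ a k) :
    ∑ k ∈ s, (a k)^2 ≤ (∑ k ∈ s, a k)^2 := by
  rw [sq (∑ k ∈ s, a k), Finset.sum_mul]
  apply Finset.sum_le_sum
  intro k hk
  rw [sq]
  exact mul_le_mul_of_nonneg_left (Finset.single_le_sum ha hk) (ha k hk)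

lemma fseq_div_le (n : ℕ) : (fseq (n+1) : ℝ) / (n+1).factorial
    ≤ Real.exp (2 * Real.sqrt ((n:ℝ)+1)) := by
  rw [fseq_succ_div]
  set s := Real.sqrt ((n:ℝ)+1) with hs
  have hs0 : (0:ℝ) ≤ s := Real.sqrt_nonneg _
  have hterm : ∀ k ∈ range (n+1), (n.choose k : ℝ) / (k+1).factorial
      ≤ (s^k / k.factorial)^2 := by
    intro k _
    have h1 : (n.choose k : ℝ) ≤ (n:ℝ)^k / k.factorial := Nat.choose_le_pow_div k n
    have h2 : ((n:ℝ))^k ≤ ((n:ℝ)+1)^k :=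
      pow_le_pow_left₀ (Nat.cast_nonneg n) (by linarith) k
    have h3 : ((n:ℝ)+1)^k = (s^k)^2 := by
      rw [← pow_mul, mul_comm k 2, pow_mul, hs, Real.sq_sqrt (by positivity)]
    have h5 : (k.factorial : ℝ) ≤ (k+1).factorial := by
      exact_mod_cast Nat.factorial_le (Nat.le_succ k)
    have h6 : (0:ℝ) < k.factorial := by positivity
    have h7 : (0:ℝ) < (k+1).factorial := by positivity
    calc (n.choose k : ℝ) / (k+1).factorial
        ≤ ((n:ℝ)^k / k.factorial) / k.factorial :=
          div_le_div₀ (by positivity) h1 h6 h5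
      _ ≤ (((n:ℝ)+1)^k) / (k.factorial * k.factorial) := by
          rw [div_div]
          exact (div_le_div_iff_of_pos_right (by positivity)).mpr h2
      _ = (s^k / k.factorial)^2 := by
          rw [div_pow, ← h3, sq]
  calc ∑ k ∈ range (n+1), (n.choose k : ℝ) / (k+1).factorial
      ≤ ∑ k ∈ range (n+1), (s^k / k.factorial)^2 := Finset.sum_le_sum hterm
    _ ≤ (∑ k ∈ range (n+1), s^k / k.factorial)^2 :=
        sum_sq_le_sq_sum (fun k _ => by positivity)
    _ ≤ (Real.exp s)^2 := by
        apply pow_le_pow_left₀ (by positivity)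
        exact Real.sum_le_exp_of_nonneg hs0 (n+1)
    _ = Real.exp (2*s) := by
        rw [sq, ← Real.exp_add, two_mul]

lemma fseq_ge (n : ℕ) : n.factorial ≤ fseq n := by
  cases n with
  | zero => simp [fseq]
  | succ m =>
    have h1 : (1:ℕ) ∈ range (m+2) := by simp
    have h2 : (m+1).choose 1 * Nat.ascFactorial 1 (m+1-1) = (m+1).factorial := by
      rw [Nat.choose_one_right, Nat.succ_sub_one, Nat.one_ascFactorial,
        Nat.factorial_succ]
    calc (m+1).factorial
        = (m+1).choose 1 * Nat.ascFactorial 1 (m+1-1) := h2.symm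
      _ ≤ fseq (m+1) := Finset.single_le_sum (f := fun k => (m+1).choose k
          * Nat.ascFactorial k (m+1-k)) (fun i _ => Nat.zero_le _) h1

lemma tree_tsum {x : ℝ} (hx : |x| < 1) :
    ∑' n : ℕ, ((if n = 0 then 0 else n.factorial : ℕ) : ℝ) * x ^ n / n.factorial
      = x / (1 - x) := by
  have hxn : ‖x‖ < 1 := by rwa [Real.norm_eq_abs]
  have hx1 : x < 1 := (abs_lt.mp hx).2
  have h1x : (1:ℝ) - x ≠ 0 := by linarith
  have hg : Summable (fun n : ℕ => x^n) := summable_geometric_of_norm_lt_one hxn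
  have hh : Summable (fun n : ℕ => if n = 0 then (1:ℝ) else 0) :=
    (hasSum_ite_eq 0 (1:ℝ)).summable
  have heq : ∀ n : ℕ, ((if n = 0 then 0 else n.factorial : ℕ) : ℝ) * x ^ n / n.factorial
      = x^n - (if n = 0 then (1:ℝ) else 0) := by
    intro n
    cases n with
    | zero => simp
    | succ m =>
      rw [if_neg (Nat.succ_ne_zero m), if_neg (Nat.succ_ne_zero m), sub_zero,
        mul_comm, mul_div_assoc, div_self (by positivity), mul_one]
  rw [tsum_congr heq, Summable.tsum_sub hg hh, tsum_geometric_of_norm_lt_one hxn, tsum_ite_eq]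
  field_simp
  ring

lemma forest_tsum {x : ℝ} (hx : |x| < 1) :
    ∑' n : ℕ, (fseq n : ℝ) * x ^ n / n.factorial = Real.exp (x / (1 - x)) := by
  have hxn : ‖x‖ < 1 := by rwa [Real.norm_eq_abs]
  have hxan : ‖|x|‖ < 1 := by rwa [Real.norm_eq_abs, abs_abs]
  have hx1 : x < 1 := (abs_lt.mp hx).2
  have h1x : (1:ℝ) - x ≠ 0 := by linarith
  have h1xa : (0:ℝ) < 1 - |x| := by linarith [abs_nonneg x, hx]
  set y := x / (1 - x) with hy
  set g : ℕ × ℕ → ℝ := fun p =>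
    ((p.2 + p.1).choose p.1 : ℝ) * x^(p.2 + p.1 + 1) / (p.1 + 1).factorial with hgdef
  set G : ℕ × ℕ → ℝ := fun p =>
    ((p.2 + p.1).choose p.1 : ℝ) * |x|^(p.2 + p.1 + 1) / (p.1 + 1).factorial with hGdef
  -- summability of G
  have hGnn : 0 ≤ G := by
    intro p
    simp only [hGdef]
    positivity
  have hGk : ∀ k : ℕ, (fun m => G (k, m))
      = fun m => (((m + k).choose k : ℝ) * |x|^m) * (|x|^(k+1) / (k+1).factorial) := by
    intro k
    funext m
    simp only [hGdef]
    rw [pow_add]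
    ring
  have hGsumk : ∀ k : ℕ, Summable (fun m => G (k, m)) := by
    intro k
    rw [hGk k]
    exact (summable_choose_mul_geometric_of_norm_lt_one k hxan).mul_right _
  have hGtsum : ∀ k : ℕ, ∑' m, G (k, m)
      = (|x| / (1 - |x|))^(k+1) / (k+1).factorial := by
    intro k
    rw [hGk k, tsum_mul_right, tsum_choose_mul_geometric_of_norm_lt_one k hxan]
    rw [div_pow]
    field_simp
  have hGS : Summable G := by
    rw [summable_prod_of_nonneg hGnn]
    refine ⟨hGsumk, ?_⟩
    apply Summable.congr ((summable_nat_add_iff 1).mpr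
      (Real.summable_pow_div_factorial (|x| / (1 - |x|))))
    intro k
    exact (hGtsum k).symm
  have hgS : Summable g := by
    apply Summable.of_norm
    apply Summable.congr hGS
    intro p
    simp only [hgdef, hGdef, Real.norm_eq_abs, abs_div, abs_mul, abs_pow,
      abs_abs, Nat.abs_cast]
  -- first evaluation : sum over k then m
  have hgk : ∀ k : ℕ, (fun m => g (k, m))
      = fun m => (((m + k).choose k : ℝ) * x^m) * (x^(k+1) / (k+1).factorial) := by
    intro k
    funext m
    simp only [hgdef]
    rw [pow_add]
    ring
  have hT1 : ∑' p : ℕ × ℕ, g p = Real.exp y - 1 := by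
    rw [Summable.tsum_prod' hgS (fun k => hgS.prod_factor k)]
    have hinner : ∀ k : ℕ, ∑' m, g (k, m) = y^(k+1) / (k+1).factorial := by
      intro k
      rw [hgk k, tsum_mul_right, tsum_choose_mul_geometric_of_norm_lt_one k hxn]
      rw [hy, div_pow]
      field_simp
    rw [tsum_congr hinner]
    have hexp : Real.exp y = ∑' n : ℕ, y^n / n.factorial := by
      rw [Real.exp_eq_exp_ℝ, NormedSpace.exp_eq_tsum_div]
    have hsumy : Summable (fun n : ℕ => y^n / n.factorial) :=
      Real.summable_pow_div_factorial y
    have h0 := Summable.tsum_eq_zero_add hsumy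
    rw [hexp, h0]
    simp
  -- regrouping by total degree
  let E : (Σ n : ℕ, Fin (n+1)) ≃ ℕ × ℕ :=
    { toFun := fun σ => (σ.2.val, σ.1 - σ.2.val)
      invFun := fun p => ⟨p.1 + p.2, ⟨p.1, by omega⟩⟩
      left_inv := by
        rintro ⟨n, k⟩
        have hk : k.val < n + 1 := k.isLt
        refine Sigma.ext (by simp; omega) ?_
        simp only []
        rw [Fin.heq_ext_iff (by simp; omega)]
      right_inv := by
        rintro ⟨a, b⟩
        simp }
  have hgE : Summable (g ∘ E) := E.summable_iff.mpr hgS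
  have hfib : ∀ n : ℕ, ∑' k : Fin (n+1), (g ∘ E) ⟨n, k⟩
      = (fseq (n+1) : ℝ) * x^(n+1) / (n+1).factorial := by
    intro n
    rw [tsum_fintype]
    have h1 : ∀ k : Fin (n+1), (g ∘ E) ⟨n, k⟩
        = (n.choose k.val : ℝ) * x^(n+1) / (k.val+1).factorial := by
      intro k
      have hk : k.val ≤ n := by omega
      simp only [hgdef, E, Function.comp, Equiv.coe_fn_mk]
      rw [Nat.sub_add_cancel hk]
    rw [Finset.sum_congr rfl (fun k _ => h1 k)]
    rw [show (fseq (n+1) : ℝ) * x^(n+1) / (n+1).factorial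
      = ((fseq (n+1) : ℝ)/(n+1).factorial) * x^(n+1) by ring, fseq_succ_div,
      Finset.sum_mul]
    rw [← Fin.sum_univ_eq_sum_range
      (fun j => (n.choose j : ℝ) / (j+1).factorial * x^(n+1)) (n+1)]
    apply Finset.sum_congr rfl
    intro k _
    ring
  have hshift : Summable (fun n : ℕ => (fseq (n+1) : ℝ) * x^(n+1) / (n+1).factorial) := by
    apply Summable.congr hgE.sigma
    intro n
    exact hfib n
  have hfull : Summable (fun n : ℕ => (fseq n : ℝ) * x^n / n.factorial) :=
    (summable_nat_add_iff 1).mp hshift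
  have hT2 : ∑' n : ℕ, ∑' k : Fin (n+1), (g ∘ E) ⟨n, k⟩ = ∑' p, g p := by
    rw [← E.tsum_eq g]
    exact (hgE.tsum_sigma' (fun b => hgE.sigma_factor b)).symm
  calc ∑' n : ℕ, (fseq n : ℝ) * x^n / n.factorial
      = (fseq 0 : ℝ) * x^0 / Nat.factorial 0
        + ∑' n : ℕ, (fseq (n+1) : ℝ) * x^(n+1) / (n+1).factorial :=
        Summable.tsum_eq_zero_add hfull
    _ = 1 + (∑' n : ℕ, ∑' k : Fin (n+1), (g ∘ E) ⟨n, k⟩) := by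
        rw [tsum_congr (fun n => (hfib n).symm)]
        norm_num [fseq]
    _ = 1 + (Real.exp y - 1) := by rw [hT2, hT1]
    _ = Real.exp y := by ring

lemma nat_rpow_inv_tendsto : Tendsto (fun n : ℕ => (n:ℝ) ^ ((n:ℝ)⁻¹)) atTop (nhds 1) := by
  have h := tendsto_rpow_div.comp (tendsto_natCast_atTop_atTop (R := ℝ))
  simpa only [Function.comp_def, one_div] using h

lemma fact_rpow_tendsto :
    Tendsto (fun n : ℕ => (n.factorial : ℝ) ^ ((n:ℝ)⁻¹) / n) atTop
      (nhds (Real.exp 1)⁻¹) := by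
  classical
  set c : ℕ → ℝ := fun n => Stirling.stirlingSeq n * Real.sqrt (2*n) with hc
  have hs := Stirling.tendsto_stirlingSeq_sqrt_pi
  have hcpos : ∀ n : ℕ, 1 ≤ n → 0 < c n := by
    intro n hn
    have h1 : 0 < Stirling.stirlingSeq n := by
      obtain ⟨m, rfl⟩ := Nat.exists_eq_succ_of_ne_zero (by omega : n ≠ 0)
      exact Stirling.stirlingSeq'_pos m
    have h2 : (0:ℝ) < Real.sqrt (2*n) := Real.sqrt_pos.mpr
      (by have : (1:ℝ) ≤ (n:ℝ) := by exact_mod_cast hn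
          linarith)
    exact mul_pos h1 h2
  -- eventual bounds on c
  have hlow : ∀ᶠ n : ℕ in atTop, 1 ≤ c n := by
    have h1 : (1:ℝ) < Real.sqrt Real.pi := by
      rw [show (1:ℝ) = Real.sqrt 1 from (Real.sqrt_one).symm]
      exact Real.sqrt_lt_sqrt (by norm_num) (by linarith [Real.pi_gt_three])
    filter_upwards [hs.eventually (eventually_gt_nhds h1), eventually_ge_atTop 1]
      with n hn hn1
    have h2 : (1:ℝ) ≤ Real.sqrt (2*n) := by
      rw [show (1:ℝ) = Real.sqrt 1 from (Real.sqrt_one).symm]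
      apply Real.sqrt_le_sqrt
      have : (1:ℝ) ≤ (n:ℝ) := by exact_mod_cast hn1
      linarith
    calc (1:ℝ) ≤ 1 * 1 := by norm_num
      _ ≤ Stirling.stirlingSeq n * Real.sqrt (2*n) :=
          mul_le_mul (le_of_lt hn) h2 (by norm_num) (by linarith)
  have hup : ∀ᶠ n : ℕ in atTop, c n ≤ ((n:ℝ))^2 := by
    have h1 : Real.sqrt Real.pi < 2 := by
      rw [Real.sqrt_lt' (by norm_num)]
      nlinarith [Real.pi_lt_four]
    filter_upwards [hs.eventually (eventually_lt_nhds h1), eventually_ge_atTop 2]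
      with n hn hn2
    have hn2' : (2:ℝ) ≤ (n:ℝ) := by exact_mod_cast hn2
    have h2 : Real.sqrt (2*n) ≤ (n:ℝ) := by
      have h3 := Real.sqrt_le_sqrt (show 2*(n:ℝ) ≤ (n:ℝ)^2 by nlinarith)
      rwa [Real.sqrt_sq (by linarith)] at h3
    calc c n ≤ 2 * (n:ℝ) := by
          rw [hc]
          apply mul_le_mul (le_of_lt hn) h2 (Real.sqrt_nonneg _) (by norm_num)
      _ ≤ (n:ℝ)^2 := by nlinarith
  -- c n ^ (n⁻¹) → 1
  have hc1 : Tendsto (fun n : ℕ => c n ^ ((n:ℝ)⁻¹)) atTop (nhds 1) := by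
    have hupT : Tendsto (fun n : ℕ => ((n:ℝ) ^ ((n:ℝ)⁻¹))^2) atTop (nhds 1) := by
      have := nat_rpow_inv_tendsto.pow 2
      simpa using this
    apply tendsto_of_tendsto_of_tendsto_of_le_of_le' tendsto_const_nhds hupT
    · filter_upwards [hlow] with n hn
      calc (1:ℝ) = 1 ^ ((n:ℝ)⁻¹) := (Real.one_rpow _).symm
        _ ≤ c n ^ ((n:ℝ)⁻¹) :=
          Real.rpow_le_rpow (by norm_num) hn (by positivity)
    · filter_upwards [hlow, hup] with n hn hup'
      calc c n ^ ((n:ℝ)⁻¹) ≤ ((n:ℝ)^2) ^ ((n:ℝ)⁻¹) :=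
            Real.rpow_le_rpow (by linarith) hup' (by positivity)
        _ = ((n:ℝ) ^ ((n:ℝ)⁻¹))^2 := by
            rw [← Real.rpow_natCast ((n:ℝ) ^ ((n:ℝ)⁻¹)) 2, ← Real.rpow_mul (Nat.cast_nonneg n),
              ← Real.rpow_natCast (n:ℝ) 2, ← Real.rpow_mul (Nat.cast_nonneg n)]
            ring_nf
  -- rewrite the factorial expression
  have heq : (fun n : ℕ => (n.factorial : ℝ) ^ ((n:ℝ)⁻¹) / n)
      =ᶠ[atTop] (fun n => c n ^ ((n:ℝ)⁻¹) * (Real.exp 1)⁻¹) := by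
    filter_upwards [eventually_ge_atTop 1] with n hn
    have hn0 : (0:ℝ) < n := by exact_mod_cast hn
    have hne : (n:ℝ) ≠ 0 := ne_of_gt hn0
    have hde : (0:ℝ) < (n:ℝ) / Real.exp 1 := by positivity
    have hfact : (n.factorial : ℝ) = c n * ((n:ℝ) / Real.exp 1) ^ n := by
      have hsdef : Stirling.stirlingSeq n
          = (n.factorial : ℝ) / (Real.sqrt (2*n) * ((n:ℝ) / Real.exp 1) ^ n) := rfl
      have h2 : (0:ℝ) < Real.sqrt (2*n) := Real.sqrt_pos.mpr (by positivity)
      rw [hc]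
      beta_reduce
      rw [hsdef]
      field_simp
    rw [hfact, Real.mul_rpow (le_of_lt (hcpos n hn)) (by positivity)]
    have h3 : (((n:ℝ) / Real.exp 1) ^ n) ^ ((n:ℝ)⁻¹) = (n:ℝ) / Real.exp 1 := by
      rw [← Real.rpow_natCast ((n:ℝ) / Real.exp 1) n, ← Real.rpow_mul (le_of_lt hde),
        mul_inv_cancel₀ hne, Real.rpow_one]
    rw [h3]
    field_simp
  have hfin := hc1.mul (tendsto_const_nhds (x := (Real.exp 1)⁻¹))
  rw [one_mul] at hfin
  exact Tendsto.congr' heq.symm hfin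

lemma ratio_tendsto :
    Tendsto (fun n : ℕ => ((fseq n : ℝ) / n.factorial) ^ ((n:ℝ)⁻¹)) atTop (nhds 1) := by
  have hU : Tendsto (fun n : ℕ => Real.exp (2 * ((n:ℝ) ^ (-(1/2) : ℝ)))) atTop (nhds 1) := by
    have h1 : Tendsto (fun n : ℕ => (n:ℝ) ^ (-(1/2) : ℝ)) atTop (nhds 0) :=
      (tendsto_rpow_neg_atTop (by norm_num)).comp (tendsto_natCast_atTop_atTop (R := ℝ))
    have h2 : Tendsto (fun n : ℕ => 2 * ((n:ℝ) ^ (-(1/2) : ℝ))) atTop (nhds 0) := by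
      simpa using h1.const_mul 2
    have h3 := (Real.continuous_exp.tendsto 0).comp h2
    simpa only [Function.comp_def, Real.exp_zero] using h3
  apply tendsto_of_tendsto_of_tendsto_of_le_of_le' tendsto_const_nhds hU
  · filter_upwards with n
    have h1 : (1:ℝ) ≤ (fseq n : ℝ) / n.factorial := by
      rw [le_div_iff₀ (by positivity)]
      rw [one_mul]
      exact_mod_cast fseq_ge n
    calc (1:ℝ) = 1 ^ ((n:ℝ)⁻¹) := (Real.one_rpow _).symm
      _ ≤ ((fseq n : ℝ) / n.factorial) ^ ((n:ℝ)⁻¹) :=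
          Real.rpow_le_rpow (by norm_num) h1 (by positivity)
  · filter_upwards [eventually_ge_atTop 1] with n hn
    obtain ⟨m, rfl⟩ := Nat.exists_eq_succ_of_ne_zero (show n ≠ 0 by omega)
    have hpos : (0:ℝ) < (m+1 : ℕ) := by positivity
    have h1 : ((fseq (m+1) : ℝ) / (m+1).factorial)
        ≤ Real.exp (2 * Real.sqrt ((m+1 : ℕ) : ℝ)) := by
      have := fseq_div_le m
      push_cast at this ⊢
      exact this
    have h2 : ((fseq (m+1) : ℝ) / (m+1).factorial) ^ (((m+1:ℕ):ℝ)⁻¹)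
        ≤ (Real.exp (2 * Real.sqrt ((m+1:ℕ):ℝ))) ^ (((m+1:ℕ):ℝ)⁻¹) :=
      Real.rpow_le_rpow (by positivity) h1 (by positivity)
    refine h2.trans (le_of_eq ?_)
    rw [← Real.exp_mul]
    congr 1
    rw [Real.sqrt_eq_rpow]
    rw [show (((m+1:ℕ):ℝ))⁻¹ = ((m+1:ℕ):ℝ) ^ ((-1 : ℝ)) by
      rw [Real.rpow_neg_one]]
    rw [mul_assoc, ← Real.rpow_add hpos]
    norm_num

lemma final_limit :
    Tendsto (fun n : ℕ => (fseq n : ℝ) ^ ((n:ℝ)⁻¹) / n) atTop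
      (nhds (Real.exp 1)⁻¹) := by
  have heq : ∀ n : ℕ, (fseq n : ℝ) ^ ((n:ℝ)⁻¹) / n
      = ((fseq n : ℝ) / n.factorial) ^ ((n:ℝ)⁻¹) * ((n.factorial : ℝ) ^ ((n:ℝ)⁻¹) / n) := by
    intro n
    have h1 : (fseq n : ℝ) = ((fseq n : ℝ) / n.factorial) * n.factorial := by
      field_simp
    conv_lhs => rw [h1]
    rw [Real.mul_rpow (by positivity) (by positivity), mul_div_assoc]
  have := ratio_tendsto.mul fact_rpow_tendsto
  rw [one_mul] at this
  exact Tendsto.congr (fun n => (heq n).symm) this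

end Aux

/-- For `S = {132, 231, 321}`: the EGF of trees is `x/(1-x)`, the EGF of
forests is `e^{x/(1-x)}`, and the forest Stanley–Wilf limit is `1/e`. -/
theorem egf_132_231_321 :
    (∀ x : ℝ, |x| < 1 →
      ∑' n : ℕ, (treeCount {⟨3, p132⟩, ⟨3, p231⟩, ⟨3, p321⟩} n : ℝ) * x ^ n /
          Nat.factorial n = x / (1 - x)) ∧
    (∀ x : ℝ, |x| < 1 →
      ∑' n : ℕ, (forestCount {⟨3, p132⟩, ⟨3, p231⟩, ⟨3, p321⟩} n : ℝ) * x ^ n /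
          Nat.factorial n = Real.exp (x / (1 - x))) ∧
    Tendsto
      (fun n : ℕ =>
        (forestCount {⟨3, p132⟩, ⟨3, p231⟩, ⟨3, p321⟩} n : ℝ) ^ ((n : ℝ)⁻¹) / n)
      atTop (nhds (Real.exp 1)⁻¹) := by
  have htree : ∀ n : ℕ, (treeCount {⟨3, p132⟩, ⟨3, p231⟩, ⟨3, p321⟩} n : ℝ)
      = ((if n = 0 then 0 else n.factorial : ℕ) : ℝ) := by
    intro n
    norm_cast
    exact treeCount_eq n
  have hforest : ∀ n : ℕ, (forestCount {⟨3, p132⟩, ⟨3, p231⟩, ⟨3, p321⟩} n : ℝ)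
      = (fseq n : ℝ) := by
    intro n
    norm_cast
    rw [forestCount_eq]
    rfl
  refine ⟨?_, ?_, ?_⟩
  · intro x hx
    rw [tsum_congr (fun n => by rw [htree n])]
    exact tree_tsum hx
  · intro x hx
    rw [tsum_congr (fun n => by rw [hforest n])]
    exact forest_tsum hx
  · apply Tendsto.congr (f₁ := fun n : ℕ => (fseq n : ℝ) ^ ((n:ℝ)⁻¹) / n)
    · intro n
      rw [hforest n]
    · exact final_limit
end
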